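/- arXiv:2007.13782 — 5 statements merged into one kernel-verified Lean document; each statement's English description precedes it below -/
import Mathlib

section
/- Let P' be a consistent neighborly path system in an induced subgraph G' of a graph G. Then P' can be extended to a consistent neighborly path system in G. -/
open SimpleGraph

variable {V : Type*}

/-- Total weight of a walk: sum of the weights of its edges. -/
def walkWeight {G : SimpleGraph V} (w : Sym2 V → ℝ) {u v : V} (p : G.Walk u v) : ℝ :=
  (p.edges.map w).sum

/-- A path system: a choice of a simple path between every (ordered) pair of vertices. -/
def IsPathSystem (G : SimpleGraph V) (P : ∀ u v : V, G.Walk u v) : Prop :=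
  ∀ u v, (P u v).IsPath

/-- Consistency: any subpath of a chosen path is itself a chosen path. -/
def Consistent (G : SimpleGraph V) (P : ∀ u v : V, G.Walk u v) : Prop :=
  ∀ (u v x y : V) (r : G.Walk u x) (q : G.Walk x y) (s : G.Walk y v),
    P u v = r.append (q.append s) → q = P x y

/-- `w` induces `P`: every chosen path is a `w`-shortest path between its endpoints. -/
def Induces (G : SimpleGraph V) (w : Sym2 V → ℝ) (P : ∀ u v : V, G.Walk u v) : Prop :=
  ∀ (u v : V) (Q : G.Walk u v), Q.IsPath → walkWeight w (P u v) ≤ walkWeight w Q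

/-- `w` strictly induces `P`: every chosen path is the unique `w`-shortest path. -/
def StrictlyInduces (G : SimpleGraph V) (w : Sym2 V → ℝ) (P : ∀ u v : V, G.Walk u v) : Prop :=
  ∀ (u v : V) (Q : G.Walk u v), Q.IsPath → Q ≠ P u v →
    walkWeight w (P u v) < walkWeight w Q

/-- A graph is metrizable if every consistent path system in it is induced by a
positive edge weight function. -/
def Metrizable (G : SimpleGraph V) : Prop :=
  ∀ P : ∀ u v : V, G.Walk u v, IsPathSystem G P → Consistent G P →
    ∃ w : Sym2 V → ℝ, (∀ e ∈ G.edgeSet, 0 < w e) ∧ Induces G w P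

/-- A graph is strictly metrizable if every consistent path system in it is strictly
induced by a positive edge weight function. -/
def StrictlyMetrizable (G : SimpleGraph V) : Prop :=
  ∀ P : ∀ u v : V, G.Walk u v, IsPathSystem G P → Consistent G P →
    ∃ w : Sym2 V → ℝ, (∀ e ∈ G.edgeSet, 0 < w e) ∧ StrictlyInduces G w P

/-- A path system is neighborly if the chosen path between adjacent vertices is the
edge between them. -/
def Neighborly (G : SimpleGraph V) (P : ∀ u v : V, G.Walk u v) : Prop :=
  ∀ u v (h : G.Adj u v), P u v = Walk.cons h Walk.nil


namespace PSExt
variable {V : Type*} {G : SimpleGraph V} (p : V → Prop) [DecidablePred p]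



def lastP : {a c : V} → G.Walk a c → Option (Σ' (b : V) (_ : p b), G.Walk b c)
  | a, _, Walk.nil => if h : p a then some ⟨a, h, Walk.nil⟩ else none
  | a, _, Walk.cons h W =>
    match lastP W with
    | some r => some r
    | none => if ha : p a then some ⟨a, ha, Walk.cons h W⟩ else none


theorem lastP_none {a c : V} {W : G.Walk a c} (h : lastP p W = none) :
    ∀ y ∈ W.support, ¬ p y := by
  induction W with
  | nil =>
    simp only [lastP] at h
    split at h
    · exact absurd h (by simp)
    · simpa using ‹¬ p _›
  | cons hadj W ih =>
    simp only [lastP] at h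
    split at h
    · exact absurd h (by simp)
    · rename_i heq
      split at h
      · exact absurd h (by simp)
      · intro y hy
        rcases List.mem_cons.mp ((Walk.support_cons _ _) ▸ hy) with rfl | hy
        · assumption
        · exact ih heq y hy

theorem lastP_eq_none {a c : V} {W : G.Walk a c} (h : ∀ y ∈ W.support, ¬ p y) :
    lastP p W = none := by
  induction W with
  | nil => simp only [lastP]; rw [dif_neg (h _ (by simp))]
  | cons hadj W ih =>
    simp only [lastP]
    rw [ih (fun y hy => h y (by simp [hy]))]
    rw [dif_neg (h _ (by simp))]

/-- If the walk starts at `b`, `p b`, and no other support vertex satisfies `p`,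
then `lastP` returns `b` with the whole walk. -/
theorem lastP_start {b c : V} {W : G.Walk b c} (hb : p b)
    (hall : ∀ y ∈ W.support, p y → y = b) (htl : b ∉ W.support.tail) :
    lastP p W = some ⟨b, hb, W⟩ := by
  cases W with
  | nil => simp only [lastP]; rw [dif_pos hb]
  | cons hadj W =>
    have hnone : lastP p W = none := by
      refine lastP_eq_none p fun y hy hpy => ?_
      have : y = b := hall y (by simp [hy]) hpy
      subst this
      exact htl (by simpa using hy)
    simp only [lastP]
    rw [hnone]
    simp only []
    rw [dif_pos hb]

/-- If the endpoint satisfies `p`, `lastP` returns the endpoint with `nil`. -/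
theorem lastP_end {a c : V} (W : G.Walk a c) (hc : p c) :
    lastP p W = some ⟨c, hc, Walk.nil⟩ := by
  induction W with
  | nil => simp only [lastP]; rw [dif_pos hc]
  | cons hadj W ih => simp only [lastP]; rw [ih]

theorem lastP_append {a b c : V} (A : G.Walk a b) (B : G.Walk b c) :
    lastP p (A.append B) =
      match lastP p B with
      | some r => some r
      | none => (lastP p A).map fun r => ⟨r.1, r.2.1, r.2.2.append B⟩ := by
  induction A with
  | nil =>
    rw [Walk.nil_append]
    rcases h : lastP p B with _ | r
    · have hb : ¬ p _ := lastP_none p h _ (Walk.start_mem_support B)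
      simp only [lastP]
      rw [dif_neg hb]
      rfl
    · rfl
  | cons hadj A ih =>
    rw [Walk.cons_append]
    simp only [lastP]
    rw [ih]
    rcases h : lastP p B with _ | r
    · simp only []
      rcases h2 : lastP p A with _ | r2
      · simp only [Option.map_none]
        rcases h3 : (decide (p _)) with _ | _
        · rw [dif_neg (of_decide_eq_false h3), dif_neg (of_decide_eq_false h3)]
          rfl
        · rw [dif_pos (of_decide_eq_true h3), dif_pos (of_decide_eq_true h3)]
          rfl
      · rfl
    · rfl


def firstP : {a c : V} → G.Walk a c → Option (Σ' (b : V) (_ : p b), G.Walk a b)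
  | a, _, Walk.nil => if h : p a then some ⟨a, h, Walk.nil⟩ else none
  | a, _, Walk.cons h W =>
    if ha : p a then some ⟨a, ha, Walk.nil⟩
    else (firstP W).map fun r => ⟨r.1, r.2.1, Walk.cons h r.2.2⟩

theorem firstP_none {a c : V} {W : G.Walk a c} (h : firstP p W = none) :
    ∀ y ∈ W.support, ¬ p y := by
  induction W with
  | nil =>
    simp only [firstP] at h
    split at h
    · exact absurd h (by simp)
    · simpa using ‹¬ p _›
  | cons hadj W ih =>
    simp only [firstP] at h
    split at h
    · exact absurd h (by simp)
    · intro y hy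
      rcases List.mem_cons.mp ((Walk.support_cons _ _) ▸ hy) with rfl | hy
      · assumption
      · exact ih (Option.map_eq_none_iff.mp h) y hy

theorem firstP_spec {a c : V} {W : G.Walk a c} (r : Σ' (b : V) (_ : p b), G.Walk a b)
    (h : firstP p W = some r) :
    (∃ S : G.Walk r.1 c, W = r.2.2.append S) ∧ ∀ y ∈ r.2.2.support, p y → y = r.1 := by
  induction W with
  | nil =>
    simp only [firstP] at h
    split at h
    · obtain rfl := (Option.some_inj.mp h).symm
      exact ⟨⟨Walk.nil, rfl⟩, by simp⟩
    · exact absurd h (by simp)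
  | cons hadj W ih =>
    simp only [firstP] at h
    split at h
    · obtain rfl := (Option.some_inj.mp h).symm
      exact ⟨⟨Walk.cons hadj W, rfl⟩, by simp⟩
    · rcases Option.map_eq_some_iff.mp h with ⟨r', hr', rfl⟩
      obtain ⟨⟨S, hS⟩, hall⟩ := ih r' hr'
      refine ⟨⟨S, by rw [Walk.cons_append, ← hS]⟩, ?_⟩
      intro y hy hpy
      rcases List.mem_cons.mp ((Walk.support_cons _ _) ▸ hy) with rfl | hy
      · exact absurd hpy ‹¬ p _›
      · exact hall y hy hpy

theorem firstP_start {a c : V} (W : G.Walk a c) (ha : p a) :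
    firstP p W = some ⟨a, ha, Walk.nil⟩ := by
  cases W with
  | nil => simp only [firstP]; rw [dif_pos ha]
  | cons hadj W => simp only [firstP]; rw [dif_pos ha]

/-- If the walk ends at `m`, is a path, `p m`, and no other support vertex satisfies
`p`, then `firstP` returns `m` with the whole walk. -/
theorem firstP_end {a m : V} {W : G.Walk a m} (hW : W.IsPath) (hm : p m)
    (hall : ∀ y ∈ W.support, p y → y = m) :
    firstP p W = some ⟨m, hm, W⟩ := by
  induction W with
  | nil => simp only [firstP]; rw [dif_pos hm]
  | cons hadj W ih =>
    rename_i u v w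
    have hne : ¬ p u := by
      intro hpa
      have hu : u = w := hall u (Walk.start_mem_support _) hpa
      exact absurd (Walk.end_mem_support W) (hu ▸ ((Walk.cons_isPath_iff _ _).mp hW).2)
    simp only [firstP]
    rw [dif_neg hne]
    rw [ih ((Walk.cons_isPath_iff _ _).mp hW).1 hm (fun y hy => hall y (by simp [hy]))]
    rfl

theorem firstP_append {a b c : V} (A : G.Walk a b) (B : G.Walk b c) :
    firstP p (A.append B) =
      match firstP p A with
      | some r => some r
      | none => (firstP p B).map fun r => ⟨r.1, r.2.1, A.append r.2.2⟩ := by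
  induction A with
  | nil =>
    rename_i u
    rw [Walk.nil_append]
    by_cases hb : p u
    · rw [firstP_start p B hb, firstP_start p (Walk.nil : G.Walk u u) hb]
    · rcases h : firstP p B with _ | r
      · simp only [firstP]
        rw [dif_neg hb]
        rfl
      · simp only [firstP]
        rw [dif_neg hb]
        rfl
  | cons hadj A ih =>
    rename_i u v w
    rw [Walk.cons_append]
    simp only [firstP]
    by_cases ha : p u
    · rw [dif_pos ha, dif_pos ha]
    · rw [dif_neg ha, dif_neg ha, ih]
      rcases h2 : firstP p A with _ | r2
      · rcases h3 : firstP p B with _ | r3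
        · rfl
        · rfl
      · rfl


theorem lastP_spec' {a c : V} {W : G.Walk a c} (r : Σ' (b : V) (_ : p b), G.Walk b c)
    (h : lastP p W = some r) :
    (∃ T : G.Walk a r.1, W = T.append r.2.2) ∧ ∀ y ∈ r.2.2.support, p y → y = r.1 := by
  induction W with
  | nil =>
    simp only [lastP] at h
    split at h
    · obtain rfl := (Option.some_inj.mp h).symm
      exact ⟨⟨Walk.nil, rfl⟩, by simp⟩
    · exact absurd h (by simp)
  | cons hadj W ih =>
    simp only [lastP] at h
    split at h
    · rename_i r' heq
      obtain rfl : r' = r := Option.some_inj.mp h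
      obtain ⟨⟨T, hT⟩, hall⟩ := ih r' heq
      exact ⟨⟨Walk.cons hadj T, by rw [Walk.cons_append, hT]⟩, hall⟩
    · rename_i heq
      split at h
      · obtain rfl := (Option.some_inj.mp h).symm
        refine ⟨⟨Walk.nil, (Walk.nil_append _).symm⟩, ?_⟩
        intro y hy hpy
        rcases List.mem_cons.mp ((Walk.support_cons _ _) ▸ hy) with rfl | hy
        · rfl
        · exact absurd hpy (lastP_none p heq y hy)
      · exact absurd h (by simp)

theorem concat_cases {a c : V} (W : G.Walk a c) :
    (∃ h : a = c, W = Walk.nil.copy rfl h) ∨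
      ∃ (d : V) (W' : G.Walk a d) (h : G.Adj d c), W = W'.concat h := by
  cases W with
  | nil => exact Or.inl ⟨rfl, (Walk.copy_rfl_rfl _).symm⟩
  | cons h q => exact Or.inr (Walk.exists_cons_eq_concat h q)

/-- The invariant: a partial consistent neighborly path system supported on `t`. -/
def Good (G : SimpleGraph V) (t : Set V) (Q : ∀ u v : V, G.Walk u v) : Prop :=
  (∀ u ∈ t, ∀ v ∈ t, (Q u v).IsPath) ∧
  (∀ u ∈ t, ∀ v ∈ t, ∀ y ∈ (Q u v).support, y ∈ t) ∧
  (∀ u ∈ t, ∀ v ∈ t, ∀ (a b : V) (r : G.Walk u a) (q : G.Walk a b) (s₂ : G.Walk b v),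
      Q u v = r.append (q.append s₂) → q = Q a b) ∧
  (∀ u ∈ t, ∀ v ∈ t, ∀ (h : G.Adj u v), Q u v = Walk.cons h Walk.nil)

variable [DecidableEq V]

/-- The one-vertex extension of a partial path system. -/
def extQ (G : SimpleGraph V) (Q D : ∀ u v : V, G.Walk u v) (x n0 : V)
    (p : V → Prop) [DecidablePred p] (hp : ∀ w, p w → G.Adj x w) : ∀ u v : V, G.Walk u v :=
  fun u v =>
    if hu : u = x then
      if hv : v = x then (Walk.nil : G.Walk x x).copy hu.symm hv.symm
      else
        (match lastP p (Q n0 v) with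
         | some r => Walk.cons (hp r.1 r.2.1) r.2.2
         | none => D x v).copy hu.symm rfl
    else if hv : v = x then
      (match firstP p (Q u n0) with
       | some r => r.2.2.append (Walk.cons (hp r.1 r.2.1).symm Walk.nil)
       | none => D u x).copy rfl hv.symm
    else Q u v

variable {Q D : ∀ u v : V, G.Walk u v} {x n0 : V} {hp : ∀ w, p w → G.Adj x w}

theorem extQ_xx : extQ G Q D x n0 p hp x x = Walk.nil := by
  simp [extQ]

theorem extQ_xv {v : V} (hv : v ≠ x) (r : Σ' (b : V) (_ : p b), G.Walk b v)
    (hsome : lastP p (Q n0 v) = some r) :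
    extQ G Q D x n0 p hp x v = Walk.cons (hp r.1 r.2.1) r.2.2 := by
  simp [extQ, hv, hsome]

theorem extQ_vx {u : V} (hu : u ≠ x) (r : Σ' (b : V) (_ : p b), G.Walk u b)
    (hsome : firstP p (Q u n0) = some r) :
    extQ G Q D x n0 p hp u x = r.2.2.append (Walk.cons (hp r.1 r.2.1).symm Walk.nil) := by
  simp [extQ, hu, hsome]

theorem extQ_other {u v : V} (hu : u ≠ x) (hv : v ≠ x) :
    extQ G Q D x n0 p hp u v = Q u v := by
  simp [extQ, hu, hv]

theorem step (G : SimpleGraph V) (t : Set V) (Q D : ∀ u v : V, G.Walk u v)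
    (hQ : Good G t Q) (x n0 : V) (hx : x ∉ t) (hn0 : n0 ∈ t) (hxn0 : G.Adj x n0) :
    ∃ Q' : ∀ u v : V, G.Walk u v, Good G (insert x t) Q' ∧
      ∀ u v : V, u ≠ x → v ≠ x → Q' u v = Q u v := by
  classical
  obtain ⟨hP, hS, hC, hN4⟩ := hQ
  set p : V → Prop := fun w => w ∈ t ∧ G.Adj x w with hpdef
  have hp : ∀ w, p w → G.Adj x w := fun w h => h.2
  have key1 : ∀ v ∈ t, ∃ (b : V) (hb : p b), lastP p (Q n0 v) = some ⟨b, hb, Q b v⟩ := by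
    intro v hv
    have hpn0 : p n0 := ⟨hn0, hxn0⟩
    rcases hsome : lastP p (Q n0 v) with _ | ⟨b, hb, S⟩
    · exact absurd hpn0 (lastP_none p hsome n0 (Walk.start_mem_support _))
    · obtain ⟨⟨T, hT⟩, hall⟩ := lastP_spec' p ⟨b, hb, S⟩ hsome
      have hSe : S = Q b v :=
        hC n0 hn0 v hv b v T S Walk.nil (by rw [Walk.append_nil]; exact hT)
      subst hSe
      exact ⟨b, hb, rfl⟩
  have key2 : ∀ v ∈ t, ∀ (b : V) (hb : p b), lastP p (Q n0 v) = some ⟨b, hb, Q b v⟩ →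
      ∀ (w : V) (A : G.Walk b w) (B : G.Walk w v), Q b v = A.append B →
        w ∈ t ∧ A = Q b w ∧ lastP p (Q n0 w) = some ⟨b, hb, Q b w⟩ := by
    intro v hv b hb hsome w A B hsplit
    obtain ⟨⟨T, hT⟩, hall⟩ := lastP_spec' p ⟨b, hb, Q b v⟩ hsome
    have hw : w ∈ t := hS b hb.1 v hv w (by
      rw [hsplit]
      exact (Walk.mem_support_append_iff _ _).2 (Or.inl (Walk.end_mem_support _)))
    have hA : A = Q b w :=
      hC b hb.1 v hv b w Walk.nil A B (by rw [Walk.nil_append]; exact hsplit)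
    have hQn0w : Q n0 w = T.append (Q b w) := by
      refine (hC n0 hn0 v hv n0 w Walk.nil (T.append (Q b w)) B ?_).symm
      rw [Walk.nil_append, ← Walk.append_assoc, ← hA, ← hsplit]
      exact hT
    have hlast : lastP p (Q b w) = some ⟨b, hb, Q b w⟩ := by
      refine lastP_start p hb ?_ ?_
      · intro y hy hpy
        refine hall y ?_ hpy
        rw [hsplit]
        exact (Walk.mem_support_append_iff _ _).2 (Or.inl (hA ▸ hy))
      · have hnodup := (hP b hb.1 w hw).support_nodup
        rw [Walk.support_eq_cons] at hnodup
        exact (List.nodup_cons.mp hnodup).1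
    refine ⟨hw, hA, ?_⟩
    rw [hQn0w, lastP_append, hlast]
  have key1' : ∀ u ∈ t, ∃ (m : V) (hm : p m), firstP p (Q u n0) = some ⟨m, hm, Q u m⟩ := by
    intro u hu
    have hpn0 : p n0 := ⟨hn0, hxn0⟩
    rcases hsome : firstP p (Q u n0) with _ | ⟨m, hm, T⟩
    · exact absurd hpn0 (firstP_none p hsome n0 (Walk.end_mem_support _))
    · obtain ⟨⟨S0, hS0⟩, hall⟩ := firstP_spec p ⟨m, hm, T⟩ hsome
      have hTe : T = Q u m :=
        hC u hu n0 hn0 u m Walk.nil T S0 (by rw [Walk.nil_append]; exact hS0)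
      subst hTe
      exact ⟨m, hm, rfl⟩
  have key2' : ∀ u ∈ t, ∀ (m : V) (hm : p m), firstP p (Q u n0) = some ⟨m, hm, Q u m⟩ →
      ∀ (w : V) (A : G.Walk u w) (B : G.Walk w m), Q u m = A.append B →
        w ∈ t ∧ B = Q w m ∧ firstP p (Q w n0) = some ⟨m, hm, Q w m⟩ := by
    intro u hu m hm hsome w A B hsplit
    obtain ⟨⟨S0, hS0⟩, hall⟩ := firstP_spec p ⟨m, hm, Q u m⟩ hsome
    have hw : w ∈ t := hS u hu m hm.1 w (by
      rw [hsplit]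
      exact (Walk.mem_support_append_iff _ _).2 (Or.inl (Walk.end_mem_support _)))
    have hB : B = Q w m :=
      hC u hu m hm.1 w m A B Walk.nil (by rw [Walk.append_nil]; exact hsplit)
    have hQwn0 : Q w n0 = (Q w m).append S0 := by
      refine (hC u hu n0 hn0 w n0 A ((Q w m).append S0) Walk.nil ?_).symm
      rw [Walk.append_nil, Walk.append_assoc, ← hB, ← hsplit]
      exact hS0
    have hfirst : firstP p (Q w m) = some ⟨m, hm, Q w m⟩ := by
      refine firstP_end p (hP w hw m hm.1) hm ?_
      intro y hy hpy
      refine hall y ?_ hpy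
      rw [hsplit]
      exact (Walk.mem_support_append_iff _ _).2 (Or.inr (hB ▸ hy))
    refine ⟨hw, hB, ?_⟩
    rw [hQwn0, firstP_append, hfirst]
  refine ⟨extQ G Q D x n0 p hp, ⟨?_, ?_, ?_, ?_⟩, fun u v hu hv => extQ_other p hu hv⟩
  · -- IsPath
    intro u hu v hv
    rcases Set.mem_insert_iff.mp hu with hux0 | hut
    on_goal 1 => obtain rfl := hux0.symm
    · rcases Set.mem_insert_iff.mp hv with hvx0 | hvt
      on_goal 1 => obtain rfl := hvx0.symm
      · rw [extQ_xx]
        exact Walk.IsPath.nil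
      · have hvx : v ≠ x := fun h => hx (h ▸ hvt)
        obtain ⟨b, hb, hsome⟩ := key1 v hvt
        rw [extQ_xv p hvx _ hsome, Walk.cons_isPath_iff]
        exact ⟨hP b hb.1 v hvt, fun hxs => hx (hS b hb.1 v hvt x hxs)⟩
    · rcases Set.mem_insert_iff.mp hv with hvx0 | hvt
      on_goal 1 => obtain rfl := hvx0.symm
      · have hux : u ≠ x := fun h => hx (h ▸ hut)
        obtain ⟨m, hm, hsome⟩ := key1' u hut
        rw [extQ_vx p hux _ hsome, ← Walk.concat_eq_append, ← Walk.isPath_reverse_iff,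
          Walk.reverse_concat, Walk.cons_isPath_iff]
        refine ⟨(Walk.isPath_reverse_iff _).2 (hP u hut m hm.1), ?_⟩
        intro hxs
        rw [Walk.support_reverse, List.mem_reverse] at hxs
        exact hx (hS u hut m hm.1 x hxs)
      · rw [extQ_other p (show u ≠ x from fun h => hx (h ▸ hut)) (show v ≠ x from fun h => hx (h ▸ hvt))]
        exact hP u hut v hvt
  · -- support
    intro u hu v hv y hy
    rcases Set.mem_insert_iff.mp hu with hux0 | hut
    on_goal 1 => obtain rfl := hux0.symm
    · rcases Set.mem_insert_iff.mp hv with hvx0 | hvt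
      on_goal 1 => obtain rfl := hvx0.symm
      · rw [extQ_xx] at hy
        simp only [Walk.support_nil, List.mem_singleton] at hy
        exact hy ▸ Set.mem_insert _ _
      · have hvx : v ≠ x := fun h => hx (h ▸ hvt)
        obtain ⟨b, hb, hsome⟩ := key1 v hvt
        rw [extQ_xv p hvx _ hsome, Walk.support_cons] at hy
        rcases List.mem_cons.mp hy with rfl | hy
        · exact Set.mem_insert _ _
        · exact Set.mem_insert_of_mem _ (hS b hb.1 v hvt y hy)
    · rcases Set.mem_insert_iff.mp hv with hvx0 | hvt
      on_goal 1 => obtain rfl := hvx0.symm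
      · have hux : u ≠ x := fun h => hx (h ▸ hut)
        obtain ⟨m, hm, hsome⟩ := key1' u hut
        rw [extQ_vx p hux _ hsome] at hy
        rcases (Walk.mem_support_append_iff _ _).mp hy with hy | hy
        · exact Set.mem_insert_of_mem _ (hS u hut m hm.1 y hy)
        · simp only [Walk.support_cons, Walk.support_nil] at hy
          rcases List.mem_cons.mp hy with rfl | hy
          · exact Set.mem_insert_of_mem _ hm.1
          · rcases List.mem_singleton.mp hy with rfl
            exact Set.mem_insert _ _
      · rw [extQ_other p (show u ≠ x from fun h => hx (h ▸ hut)) (show v ≠ x from fun h => hx (h ▸ hvt))] at hy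
        exact Set.mem_insert_of_mem _ (hS u hut v hvt y hy)
  · -- consistency
    intro u hu v hv a b r q s₂ heq
    rcases Set.mem_insert_iff.mp hu with hux0 | hut
    on_goal 1 => obtain rfl := hux0.symm
    · rcases Set.mem_insert_iff.mp hv with hvx0 | hvt
      on_goal 1 => obtain rfl := hvx0.symm
      · rw [extQ_xx] at heq
        cases r with
        | nil =>
          rw [Walk.nil_append] at heq
          cases q with
          | nil => rw [extQ_xx]
          | cons hq q₁ =>
            rw [Walk.cons_append] at heq
            exact absurd (congrArg Walk.length heq) (by simp)
        | cons hr r₁ =>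
          rw [Walk.cons_append] at heq
          exact absurd (congrArg Walk.length heq) (by simp)
      · have hvx : v ≠ x := fun h => hx (h ▸ hvt)
        obtain ⟨b0, hb0, hsome⟩ := key1 v hvt
        rw [extQ_xv p hvx _ hsome] at heq
        cases r with
        | nil =>
          rw [Walk.nil_append] at heq
          cases q with
          | nil => rw [extQ_xx]
          | cons hq q₁ =>
            rw [Walk.cons_append] at heq
            injection heq with h1 h2 h3 h4
            subst h2
            have h5 : Q b0 v = q₁.append s₂ := eq_of_heq h4
            obtain ⟨hbt, hA, hsome2⟩ := key2 v hvt b0 hb0 hsome b q₁ s₂ h5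
            have hbx : b ≠ x := fun h => hx (h ▸ hbt)
            rw [extQ_xv p hbx _ hsome2, hA]
        | cons hr r₁ =>
          rw [Walk.cons_append] at heq
          injection heq with h1 h2 h3 h4
          subst h2
          have h5 : Q b0 v = r₁.append (q.append s₂) := eq_of_heq h4
          have hq' : q = Q a b := hC b0 hb0.1 v hvt a b r₁ q s₂ h5
          have hmem : ∀ y ∈ (r₁.append (q.append s₂)).support, y ∈ t :=
            fun y hy => hS b0 hb0.1 v hvt y (by rw [h5]; exact hy)
          have hat : a ∈ t := hmem a
            ((Walk.mem_support_append_iff _ _).2 (Or.inl (Walk.end_mem_support _)))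
          have hbt : b ∈ t := hmem b
            ((Walk.mem_support_append_iff _ _).2 (Or.inr
              ((Walk.mem_support_append_iff _ _).2 (Or.inl (Walk.end_mem_support _)))))
          rw [extQ_other p (show a ≠ x from fun h => hx (h ▸ hat)) (show b ≠ x from fun h => hx (h ▸ hbt))]
          exact hq'
    · rcases Set.mem_insert_iff.mp hv with hvx0 | hvt
      on_goal 1 => obtain rfl := hvx0.symm
      · have hux : u ≠ x := fun h => hx (h ▸ hut)
        obtain ⟨m, hm, hsome⟩ := key1' u hut
        rw [extQ_vx p hux _ hsome, ← Walk.concat_eq_append] at heq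
        rcases concat_cases s₂ with ⟨hbx, rfl⟩ | ⟨d, s₁, hs, rfl⟩
        · obtain rfl := hbx.symm
          rw [Walk.copy_rfl_rfl, Walk.append_nil] at heq
          rcases concat_cases q with ⟨hax, rfl⟩ | ⟨d, q₁, hqe, rfl⟩
          · obtain rfl := hax.symm
            rw [Walk.copy_rfl_rfl, extQ_xx]
          · rw [Walk.append_concat] at heq
            have heq' : (Q u m).concat (hp m hm).symm = (r.append q₁).concat hqe := heq
            obtain ⟨rfl, hrq⟩ := Walk.concat_inj heq'
            rw [Walk.copy_rfl_rfl] at hrq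
            obtain ⟨hat, hB, hsome2⟩ := key2' u hut m hm hsome a r q₁ hrq
            have hax : a ≠ x := fun h => hx (h ▸ hat)
            rw [extQ_vx p hax _ hsome2, ← Walk.concat_eq_append, hB]
        · rw [Walk.append_concat, Walk.append_concat] at heq
          have heq' : (Q u m).concat (hp m hm).symm = (r.append (q.append s₁)).concat hs := heq
          obtain ⟨rfl, hrq⟩ := Walk.concat_inj heq'
          rw [Walk.copy_rfl_rfl] at hrq
          have hq' : q = Q a b := hC u hut m hm.1 a b r q s₁ hrq
          have hmem : ∀ y ∈ (r.append (q.append s₁)).support, y ∈ t :=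
            fun y hy => hS u hut m hm.1 y (by rw [hrq]; exact hy)
          have hat : a ∈ t := hmem a
            ((Walk.mem_support_append_iff _ _).2 (Or.inl (Walk.end_mem_support _)))
          have hbt : b ∈ t := hmem b
            ((Walk.mem_support_append_iff _ _).2 (Or.inr
              ((Walk.mem_support_append_iff _ _).2 (Or.inl (Walk.end_mem_support _)))))
          rw [extQ_other p (show a ≠ x from fun h => hx (h ▸ hat)) (show b ≠ x from fun h => hx (h ▸ hbt))]
          exact hq'
      · rw [extQ_other p (show u ≠ x from fun h => hx (h ▸ hut)) (show v ≠ x from fun h => hx (h ▸ hvt))] at heq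
        have hq' : q = Q a b := hC u hut v hvt a b r q s₂ heq
        have hmem : ∀ y ∈ (r.append (q.append s₂)).support, y ∈ t :=
          fun y hy => hS u hut v hvt y (by rw [heq]; exact hy)
        have hat : a ∈ t := hmem a
          ((Walk.mem_support_append_iff _ _).2 (Or.inl (Walk.end_mem_support _)))
        have hbt : b ∈ t := hmem b
          ((Walk.mem_support_append_iff _ _).2 (Or.inr
            ((Walk.mem_support_append_iff _ _).2 (Or.inl (Walk.end_mem_support _)))))
        rw [extQ_other p (show a ≠ x from fun h => hx (h ▸ hat)) (show b ≠ x from fun h => hx (h ▸ hbt))]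
        exact hq'
  · -- neighborly
    intro u hu v hv hadj
    rcases Set.mem_insert_iff.mp hu with hux0 | hut
    on_goal 1 => obtain rfl := hux0.symm
    · rcases Set.mem_insert_iff.mp hv with hvx0 | hvt
      on_goal 1 => obtain rfl := hvx0.symm
      · exact absurd rfl hadj.ne
      · have hvx : v ≠ x := fun h => hx (h ▸ hvt)
        have hpv : p v := ⟨hvt, hadj⟩
        rw [extQ_xv p hvx ⟨v, hpv, Walk.nil⟩ (lastP_end p _ hpv)]
    · rcases Set.mem_insert_iff.mp hv with hvx0 | hvt
      on_goal 1 => obtain rfl := hvx0.symm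
      · have hux : u ≠ x := fun h => hx (h ▸ hut)
        have hpu : p u := ⟨hut, hadj.symm⟩
        rw [extQ_vx p hux ⟨u, hpu, Walk.nil⟩ (firstP_start p _ hpu)]
        rw [Walk.nil_append]
      · rw [extQ_other p (show u ≠ x from fun h => hx (h ▸ hut)) (show v ≠ x from fun h => hx (h ▸ hvt))]
        exact hN4 u hut v hvt hadj

section Lift
variable (s : Set V)

/-- Lift a walk whose support lies in `s` to the induced subgraph on `s`. -/
def liftW : {u v : V} → (W : G.Walk u v) → (hu : u ∈ s) → (hv : v ∈ s) →
    (h : ∀ y ∈ W.support, y ∈ s) → (G.induce s).Walk ⟨u, hu⟩ ⟨v, hv⟩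
  | _, _, Walk.nil, _, _, _ => Walk.nil
  | _, _, Walk.cons hadj W, _, hv, h =>
      Walk.cons (by exact hadj)
        (liftW W (h _ (by rw [Walk.support_cons]; exact List.mem_cons_of_mem _ (Walk.start_mem_support W))) hv
          (fun y hy => h y (by rw [Walk.support_cons]; exact List.mem_cons_of_mem _ hy)))

theorem liftW_map : ∀ {u v : V} (W : G.Walk u v) (hu : u ∈ s) (hv : v ∈ s)
    (h : ∀ y ∈ W.support, y ∈ s),
    Walk.map (Embedding.induce s).toHom (liftW s W hu hv h) = W
  | _, _, Walk.nil, _, _, _ => rfl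
  | _, _, Walk.cons hadj W, hu, hv, h => by
      simp only [liftW]
      exact congrArg (Walk.cons hadj) (liftW_map W _ hv _)

end Lift

theorem exists_crossing {t : Set V} {v u : V} (W : G.Walk v u) :
    v ∉ t → u ∈ t → ∃ x n0, x ∉ t ∧ n0 ∈ t ∧ G.Adj x n0 := by
  induction W with
  | nil => intro hv hu; exact absurd hu hv
  | cons hadj W ih =>
    rename_i a c d
    intro hv hu
    by_cases hb : c ∈ t
    · exact ⟨a, c, hv, hb, hadj⟩
    · exact ih hb hu

theorem base_good (G : SimpleGraph V) (s : Set V) [DecidablePred (· ∈ s)]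
    (P' : ∀ u v : s, (G.induce s).Walk u v)
    (hpath : IsPathSystem (G.induce s) P')
    (hcons : Consistent (G.induce s) P')
    (hnbr : Neighborly (G.induce s) P') (D : ∀ u v : V, G.Walk u v) :
    ∃ Q : ∀ u v : V, G.Walk u v, Good G s Q ∧
      ∀ (u v : V) (hu : u ∈ s) (hv : v ∈ s),
        Q u v = (P' ⟨u, hu⟩ ⟨v, hv⟩).map (Embedding.induce s).toHom := by
  have hinj : Function.Injective ((Embedding.induce (G := G) s).toHom : _ → V) :=
    fun a b hab => Subtype.ext hab
  refine ⟨fun u v =>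
    if hu : u ∈ s then
      if hv : v ∈ s then (P' ⟨u, hu⟩ ⟨v, hv⟩).map (Embedding.induce s).toHom
      else D u v
    else D u v, ⟨?_, ?_, ?_, ?_⟩, fun u v hu hv => by simp only [dif_pos hu]; erw [dif_pos hv]⟩
  · intro u hu v hv
    simp only [dif_pos hu]; erw [dif_pos hv]
    exact Walk.map_isPath_of_injective hinj (hpath _ _)
  · intro u hu v hv y hy
    simp only [dif_pos hu] at hy; erw [dif_pos hv] at hy
    erw [Walk.support_map] at hy
    obtain ⟨z, _, rfl⟩ := List.mem_map.mp hy
    exact z.2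
  · intro u hu v hv a b r q s₂ heq
    simp only [dif_pos hu] at heq; erw [dif_pos hv] at heq
    have hsup : ∀ y ∈ (r.append (q.append s₂)).support, y ∈ s := by
      intro y hy
      rw [← heq] at hy; erw [Walk.support_map] at hy
      obtain ⟨z, _, rfl⟩ := List.mem_map.mp hy
      exact z.2
    have hrs : ∀ y ∈ r.support, y ∈ s :=
      fun y hy => hsup y ((Walk.mem_support_append_iff _ _).2 (Or.inl hy))
    have hqs : ∀ y ∈ q.support, y ∈ s := fun y hy => hsup y
      ((Walk.mem_support_append_iff _ _).2 (Or.inr ((Walk.mem_support_append_iff _ _).2 (Or.inl hy))))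
    have hss : ∀ y ∈ s₂.support, y ∈ s := fun y hy => hsup y
      ((Walk.mem_support_append_iff _ _).2 (Or.inr ((Walk.mem_support_append_iff _ _).2 (Or.inr hy))))
    have ha : a ∈ s := hrs a (Walk.end_mem_support _)
    have hb : b ∈ s := hqs b (Walk.end_mem_support _)
    have heq2 : (P' ⟨u, hu⟩ ⟨v, hv⟩).map (Embedding.induce s).toHom =
        Walk.map (Embedding.induce s).toHom
          ((liftW s r hu ha hrs).append ((liftW s q ha hb hqs).append (liftW s s₂ hb hv hss))) := by
      rw [Walk.map_append, Walk.map_append, liftW_map, liftW_map, liftW_map]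
      exact heq
    have heq3 := Walk.map_injective_of_injective hinj _ _ heq2
    have hq' := hcons ⟨u, hu⟩ ⟨v, hv⟩ ⟨a, ha⟩ ⟨b, hb⟩ _ _ _ heq3
    simp only [dif_pos ha]; erw [dif_pos hb]
    rw [← hq', liftW_map]
  · intro u hu v hv hadj
    simp only [dif_pos hu]; erw [dif_pos hv]
    have hadj' : (G.induce s).Adj ⟨u, hu⟩ ⟨v, hv⟩ := hadj
    rw [hnbr _ _ hadj', Walk.map_cons]
    rfl

theorem grow [Fintype V] (G : SimpleGraph V) (hconn : G.Connected)
    (D : ∀ u v : V, G.Walk u v) (s0 : Set V)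
    (R : ∀ u v : V, u ∈ s0 → v ∈ s0 → G.Walk u v) :
    ∀ (n : ℕ) (t : Set V), tᶜ.ncard ≤ n → t.Nonempty → s0 ⊆ t →
      (∃ Q, Good G t Q ∧ ∀ (u v : V) (hu : u ∈ s0) (hv : v ∈ s0), Q u v = R u v hu hv) →
      ∃ Q, Good G Set.univ Q ∧ ∀ (u v : V) (hu : u ∈ s0) (hv : v ∈ s0), Q u v = R u v hu hv := by
  intro n
  induction n with
  | zero =>
    intro t hcard _ _ hQ
    have ht : t = Set.univ := by
      have h0 : tᶜ.ncard = 0 := Nat.le_zero.mp hcard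
      have := (Set.ncard_eq_zero (Set.toFinite _)).mp h0
      rwa [Set.compl_empty_iff] at this
    exact ht ▸ hQ
  | succ n ih =>
    intro t hcard hne hsub hQ
    by_cases ht : t = Set.univ
    · exact ht ▸ hQ
    · obtain ⟨v0, hv0⟩ := Set.nonempty_compl.mpr ht
      obtain ⟨u0, hu0⟩ := hne
      obtain ⟨x, n0, hx, hn0, hadj⟩ := exists_crossing ((hconn.preconnected v0 u0).some) hv0 hu0
      obtain ⟨Q, hQg, hQa⟩ := hQ
      obtain ⟨Q', hQ'g, hQ'e⟩ := step G t Q D hQg x n0 hx hn0 hadj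
      refine ih (insert x t) ?_ ⟨x, Set.mem_insert _ _⟩
        (hsub.trans (Set.subset_insert _ _)) ⟨Q', hQ'g, ?_⟩
      · have hcompl : (insert x t)ᶜ = tᶜ \ {x} := by
          ext y
          simp [and_comm]
        have hlt : (insert x t)ᶜ.ncard < tᶜ.ncard := by
          rw [hcompl]
          exact Set.ncard_lt_ncard (Set.sdiff_singleton_ssubset.mpr hx) (Set.toFinite _)
        omega
      · intro u v hu hv
        rw [hQ'e u v (fun h => hx (h ▸ hsub hu)) (fun h => hx (h ▸ hsub hv))]
        exact hQa u v hu hv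

end PSExt

/-- a consistent neighborly path system in an induced subgraph extends
to a consistent neighborly path system in the whole graph. -/
theorem neighborly_path_system_extends
    [Fintype V] (G : SimpleGraph V) (hconn : G.Connected) (s : Set V)
    (P' : ∀ u v : s, (G.induce s).Walk u v)
    (hpath : IsPathSystem (G.induce s) P')
    (hcons : Consistent (G.induce s) P')
    (hnbr : Neighborly (G.induce s) P') :
    ∃ P : ∀ u v : V, G.Walk u v,
      IsPathSystem G P ∧ Consistent G P ∧ Neighborly G P ∧
      ∀ u v : s, P u v = (P' u v).map (Embedding.induce s).toHom := by
  classical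
  have hne : Nonempty V := hconn.nonempty
  have D : ∀ u v : V, G.Walk u v := fun u v => (hconn.preconnected u v).some
  have hbase : ∃ (t : Set V), t.Nonempty ∧ s ⊆ t ∧
      ∃ Q, PSExt.Good G t Q ∧ ∀ (u v : V) (hu : u ∈ s) (hv : v ∈ s),
        Q u v = (P' ⟨u, hu⟩ ⟨v, hv⟩).map (Embedding.induce s).toHom := by
    rcases Set.eq_empty_or_nonempty s with hse | hsne
    · obtain ⟨v0⟩ := hne
      refine ⟨{v0}, ⟨v0, rfl⟩, by simp [hse], ?_⟩
      refine ⟨fun u v => if h : u = v then Walk.nil.copy rfl h else D u v, ⟨?_, ?_, ?_, ?_⟩, ?_⟩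
      · intro u hu v hv
        obtain rfl : v0 = u := (Set.mem_singleton_iff.mp hu).symm
        obtain rfl : v0 = v := (Set.mem_singleton_iff.mp hv).symm
        simp
      · intro u hu v hv y hy
        obtain rfl : v0 = u := (Set.mem_singleton_iff.mp hu).symm
        obtain rfl : v0 = v := (Set.mem_singleton_iff.mp hv).symm
        simp only [dif_pos, Walk.support_copy, Walk.support_nil, List.mem_singleton] at hy
        exact hy ▸ hu
      · intro u hu v hv a b r q s₂ heq
        obtain rfl : v0 = u := (Set.mem_singleton_iff.mp hu).symm
        obtain rfl : v0 = v := (Set.mem_singleton_iff.mp hv).symm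
        simp only [dif_pos rfl, Walk.copy_rfl_rfl] at heq
        cases r with
        | nil =>
          rw [Walk.nil_append] at heq
          cases q with
          | nil => simp
          | cons hq q₁ =>
            rw [Walk.cons_append] at heq
            exact absurd (congrArg Walk.length heq) (by simp)
        | cons hr r₁ =>
          rw [Walk.cons_append] at heq
          exact absurd (congrArg Walk.length heq) (by simp)
      · intro u hu v hv hadj
        obtain rfl : v0 = u := (Set.mem_singleton_iff.mp hu).symm
        obtain rfl : v0 = v := (Set.mem_singleton_iff.mp hv).symm
        exact absurd rfl hadj.ne
      · intro u v hu hv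
        exact absurd hu (hse ▸ Set.notMem_empty u)
    · obtain ⟨Q, hg, ha⟩ := PSExt.base_good G s P' hpath hcons hnbr D
      exact ⟨s, hsne, subset_rfl, Q, hg, ha⟩
  obtain ⟨t, htne, hts, hQ⟩ := hbase
  obtain ⟨Q, hgood, hagree⟩ := PSExt.grow G hconn D s
    (fun u v hu hv => (P' ⟨u, hu⟩ ⟨v, hv⟩).map (Embedding.induce s).toHom)
    tᶜ.ncard t le_rfl htne hts hQ
  refine ⟨Q, ?_, ?_, ?_, ?_⟩
  · intro u v
    exact hgood.1 u (Set.mem_univ u) v (Set.mem_univ v)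
  · intro u v a b r q s₂ heq
    exact hgood.2.2.1 u (Set.mem_univ u) v (Set.mem_univ v) a b r q s₂ heq
  · intro u v h
    exact hgood.2.2.2 u (Set.mem_univ u) v (Set.mem_univ v) h
  · intro u v
    exact hagree u v u.2 v.2
end

section
/- Let T be a consistent tree system in a graph G with corresponding path system P, and let u, v be vertices. The following are equivalent: (1) T_u = T_v; (2) every tree T_w in the system contains the path P_{u,v}; (3) T_z = T_u for every vertex z on the path P_{u,v}. -/
open SimpleGraph

variable {V : Type*}

/-- A tree system: a spanning tree `T u` of `G` for every root `u`. -/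
def IsTreeSystem (G : SimpleGraph V) (T : V → SimpleGraph V) : Prop :=
  ∀ u, T u ≤ G ∧ (T u).IsTree

/-- Consistency of a tree system: for all `u v`, the `uv`-path in `T u` and the
`uv`-path in `T v` coincide (as edge lists). -/
def TreeConsistent (T : V → SimpleGraph V) : Prop :=
  ∀ (u v : V) (p : (T u).Walk u v) (q : (T v).Walk u v),
    p.IsPath → q.IsPath → p.edges = q.edges


private lemma mem_support_iff_edges' {V : Type*} {G : SimpleGraph V} :
    ∀ {a b : V} (p : G.Walk a b) (z : V),
      z ∈ p.support ↔ z = a ∨ ∃ e ∈ p.edges, z ∈ e := by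
  intro a b p z
  induction p with
  | nil => simp
  | cons h p ih =>
    simp only [SimpleGraph.Walk.support_cons, SimpleGraph.Walk.edges_cons, List.mem_cons,
      List.mem_cons] at *
    constructor
    · rintro (rfl | hz)
      · exact Or.inr ⟨_, Or.inl rfl, Sym2.mem_mk_left _ _⟩
      · rcases ih.mp hz with rfl | ⟨e, he, hze⟩
        · exact Or.inr ⟨_, Or.inl rfl, Sym2.mem_mk_right _ _⟩
        · exact Or.inr ⟨e, Or.inr he, hze⟩
    · rintro (rfl | ⟨e, (rfl | he), hze⟩)
      · exact Or.inl rfl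
      · rcases Sym2.mem_iff.mp hze with rfl | rfl
        · exact Or.inl rfl
        · exact Or.inr (ih.mpr (Or.inl rfl))
      · exact Or.inr (ih.mpr (Or.inr ⟨e, he, hze⟩))

/-- for a consistent tree system with corresponding path system,
`T u = T v` iff every tree contains `P u v` iff `T z = T u` for every `z` on `P u v`. -/
theorem tree_system_tfae
    [Fintype V] (G : SimpleGraph V) (hconn : G.Connected)
    (T : V → SimpleGraph V) (hT : IsTreeSystem G T) (hTcons : TreeConsistent T)
    (P : ∀ u v : V, G.Walk u v) (hP : IsPathSystem G P)
    (hcorr : ∀ u v, ∃ p : (T u).Walk u v, p.IsPath ∧ p.edges = (P u v).edges)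
    (u v : V) :
    [T u = T v,
     ∀ w : V, ∀ e ∈ (P u v).edges, e ∈ (T w).edgeSet,
     ∀ z ∈ (P u v).support, T z = T u].TFAE := by
  classical
  have htree : ∀ t : V, (T t).IsTree := fun t => (hT t).2
  have hex : ∀ t a b : V, ∃ p : (T t).Walk a b, p.IsPath := fun t a b =>
    ⟨((htree t).isConnected.preconnected a b).some.bypass, Walk.bypass_isPath _⟩
  choose pth pthP using hex
  have uniq : ∀ (t a b : V) (q : (T t).Walk a b), q.IsPath → q = pth t a b := by
    intro t a b q hq
    exact congrArg Subtype.val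
      ((htree t).IsAcyclic.path_unique ⟨q, hq⟩ ⟨pth t a b, pthP t a b⟩)
  have lemA : ∀ (t a b : V) (q : (T t).Walk a b), (pth t a b).edges ⊆ q.edges := by
    intro t a b q
    have h := uniq t a b q.bypass q.bypass_isPath
    rw [← h]
    exact q.edges_bypass_subset
  have cons : ∀ a b : V, (pth a a b).edges = (pth b a b).edges := fun a b =>
    hTcons a b _ _ (pthP a a b) (pthP b a b)
  have hPe : ∀ a b : V, (pth a a b).edges = (P a b).edges := by
    intro a b
    obtain ⟨p, hp, he⟩ := hcorr a b
    have h := uniq a a b p hp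
    rw [← h]; exact he
  have rev : ∀ (t a b : V) (e : Sym2 V), e ∈ (pth t b a).edges ↔ e ∈ (pth t a b).edges := by
    intro t a b e
    have h := uniq t b a (pth t a b).reverse ((pthP t a b).reverse)
    rw [← h, Walk.edges_reverse, List.mem_reverse]
  have congrT : ∀ (t s a b : V), T t = T s → (pth t a b).edges = (pth s a b).edges := by
    intro t s a b h
    have htr : ∀ e ∈ (pth t a b).edges, e ∈ (T s).edgeSet := by
      intro e he; rw [← h]; exact (pth t a b).edges_subset_edgeSet he
    have hQ := uniq s a b ((pth t a b).transfer (T s) htr) ((pthP t a b).transfer htr)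
    rw [← hQ, Walk.edges_transfer]
  -- Key lemma
  have L : ∀ a b : V, (∀ w : V, ∀ e ∈ (pth a a b).edges, e ∈ (T w).edgeSet) →
      (T a).edgeSet ⊆ (T b).edgeSet := by
    intro a b hyp
    have step : ∀ x : V, ∀ e ∈ (pth a a x).edges, e ∈ (T b).edgeSet := by
      intro x e he
      rw [cons a x] at he
      have htr : ∀ e ∈ (pth a a b).edges, e ∈ (T x).edgeSet := fun e he => hyp x e he
      have hsub := lemA x a x (((pth a a b).transfer (T x) htr).append (pth x b x)) he
      rw [Walk.edges_append, List.mem_append] at hsub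
      rcases hsub with h1 | h2
      · rw [Walk.edges_transfer] at h1
        exact hyp b e h1
      · have hc := hTcons b x (pth b b x) (pth x b x) (pthP b b x) (pthP x b x)
        rw [← hc] at h2
        exact (pth b b x).edges_subset_edgeSet h2
    intro e he
    induction e with
    | h x y =>
      have hadj : (T a).Adj x y := he
      have hb := (isAcyclic_iff_forall_adj_isBridge.mp (htree a).IsAcyclic) hadj
      rw [isBridge_iff_adj_and_forall_walk_mem_edges] at hb
      have hm := hb ((pth a a x).reverse.append (pth a a y))
      rw [Walk.edges_append, List.mem_append, Walk.edges_reverse, List.mem_reverse] at hm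
      rcases hm with h1 | h2
      · exact step x _ h1
      · exact step y _ h2
  tfae_have 1 → 2 := by
    intro h w e he
    rw [← hPe u v] at he
    have hsub := lemA u u v ((pth u w u).reverse.append (pth u w v)) he
    rw [Walk.edges_append, List.mem_append, Walk.edges_reverse, List.mem_reverse] at hsub
    rcases hsub with h1 | h2
    · have hc := hTcons w u (pth w w u) (pth u w u) (pthP w w u) (pthP u w u)
      rw [← hc] at h1
      exact (pth w w u).edges_subset_edgeSet h1
    · rw [congrT u v w v h] at h2
      have hc := hTcons w v (pth w w v) (pth v w v) (pthP w w v) (pthP v w v)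
      rw [← hc] at h2
      exact (pth w w v).edges_subset_edgeSet h2
  tfae_have 2 → 3 := by
    intro h2 z hz
    have hz' : z ∈ (pth u u v).support := by
      rw [mem_support_iff_edges'] at hz ⊢
      rw [hPe u v]
      exact hz
    have hsplit : ∀ e ∈ (pth u u z).edges, e ∈ (pth u u v).edges := by
      have ht := (pthP u u v).takeUntil hz'
      have h := uniq u u z ((pth u u v).takeUntil z hz') ht
      intro e he
      rw [← h] at he
      exact Walk.edges_takeUntil_subset _ hz' he
    have hyp : ∀ w : V, ∀ e ∈ (pth u u z).edges, e ∈ (T w).edgeSet := by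
      intro w e he
      apply h2 w
      rw [← hPe u v]
      exact hsplit e he
    have hyp' : ∀ w : V, ∀ e ∈ (pth z z u).edges, e ∈ (T w).edgeSet := by
      intro w e he
      apply hyp w
      have hc := hTcons z u (pth z z u) (pth u z u) (pthP z z u) (pthP u z u)
      rw [hc] at he
      exact (rev u u z e).mp he
    exact SimpleGraph.edgeSet_injective (Set.Subset.antisymm (L z u hyp') (L u z hyp))
  tfae_have 3 → 1 := by
    intro h3
    exact (h3 v (Walk.end_mem_support _)).symm
  tfae_finish
end

section
/- The Petersen graph is not metrizable: there exists a consistent path system in the Petersen graph that is not induced by any positive edge weight function. -/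
open SimpleGraph

variable {V : Type*}

/-- The Petersen graph: outer 5-cycle `0..4`, spokes `i — i+5`, inner 5-cycle
`5 — 7 — 9 — 6 — 8 — 5`. -/
def petersenGraph : SimpleGraph (Fin 10) :=
  SimpleGraph.fromRel (fun a b =>
    (a.val < 5 ∧ b.val < 5 ∧ b.val = (a.val + 1) % 5) ∨
    (a.val < 5 ∧ b.val = a.val + 5) ∨
    (5 ≤ a.val ∧ 5 ≤ b.val ∧ b.val = 5 + (a.val - 5 + 2) % 5))

namespace PetersenAux

open SimpleGraph

theorem walk_eq_of_support_eq {V : Type*} {G : SimpleGraph V} : ∀ {u v : V} (p q : G.Walk u v),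
    p.support = q.support → p = q := by
  intro u v p
  induction p with
  | nil =>
    intro q h
    cases q with
    | nil => rfl
    | cons h' q' =>
      exfalso
      rw [Walk.support_nil, Walk.support_cons] at h
      have := congrArg List.length h
      simp [Walk.length_support] at this
  | cons h p ih =>
    intro q hq
    cases q with
    | nil =>
      exfalso
      rw [Walk.support_nil, Walk.support_cons] at hq
      have := congrArg List.length hq
      simp [Walk.length_support] at this
    | cons h' q' =>
      rw [Walk.support_cons, Walk.support_cons] at hq
      have h2 : p.support = q'.support := by injection hq
      have hw : p.support.head? = q'.support.head? := by rw [h2]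
      rw [Walk.support_eq_cons p, Walk.support_eq_cons q'] at hw
      have hw2 := Option.some.inj hw
      subst hw2
      rw [ih q' h2]

theorem drop_support_append {V : Type*} {G : SimpleGraph V} :
    ∀ {u x : V} (r : G.Walk u x) (m : List V),
    (r.support ++ m).drop r.length = x :: m := by
  intro u x r
  induction r with
  | nil => intro m; simp
  | cons h p ih => intro m; rw [Walk.support_cons]; simpa using ih m

instance : DecidableRel petersenGraph.Adj :=
  fun a b => decidable_of_iff _ (SimpleGraph.fromRel_adj _ a b).symm

def walkOfList : (u v : Fin 10) → List (Fin 10) → Option (petersenGraph.Walk u v)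
  | u, v, [] => if h : u = v then some (Walk.nil.copy rfl h) else none
  | u, v, a :: l =>
    if h : petersenGraph.Adj u a then (walkOfList a v l).map (fun p => Walk.cons h p)
    else none

theorem support_walkOfList : ∀ (l : List (Fin 10)) (u v : Fin 10)
    (p : petersenGraph.Walk u v), walkOfList u v l = some p → p.support = u :: l := by
  intro l
  induction l with
  | nil =>
    intro u v p h
    simp only [walkOfList] at h
    split at h
    · obtain rfl := Option.some.inj h
      next heq => subst heq; simp
    · exact absurd h (by simp)
  | cons a l ih =>
    intro u v p h
    simp only [walkOfList] at h
    split at h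
    · rw [Option.map_eq_some_iff] at h
      obtain ⟨p', hp', rfl⟩ := h
      rw [Walk.support_cons, ih a v p' hp']
    · exact absurd h (by simp)

def excep : ℕ → ℕ → Option (List (Fin 10))
  | 1, 7 => some [0,5,7] | 7, 1 => some [5,0,1]
  | 2, 8 => some [1,6,8] | 8, 2 => some [6,1,2]
  | 3, 9 => some [2,7,9] | 9, 3 => some [7,2,3]
  | 4, 5 => some [3,8,5] | 5, 4 => some [8,3,4]
  | 0, 6 => some [4,9,6] | 6, 0 => some [9,4,0]
  | _, _ => none

def cn (u v : Fin 10) : Fin 10 :=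
  (((List.finRange 10).find? (fun m =>
    decide (petersenGraph.Adj u m) && decide (petersenGraph.Adj m v)))).getD 0

def L (u v : Fin 10) : List (Fin 10) :=
  if u = v then []
  else if petersenGraph.Adj u v then [v]
  else match excep u.val v.val with
    | some l => l
    | none => [cn u v, v]

theorem hsome : ∀ u v, (walkOfList u v (L u v)).isSome := by decide

def P (u v : Fin 10) : petersenGraph.Walk u v := (walkOfList u v (L u v)).get (hsome u v)

theorem hnodup : ∀ u v, (P u v).support.Nodup := by decide

def sptList (u v : Fin 10) : List (Fin 10) := u :: L u v

theorem hA : ∀ u v, (P u v).support = sptList u v := fun u v =>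
  support_walkOfList _ u v _ (Option.some_get (hsome u v)).symm

theorem hLen : ∀ u v, (sptList u v).length ≤ 4 := by decide

theorem hC : ∀ (u v : Fin 10) (i k : Fin 4), i.val + k.val < (sptList u v).length →
    sptList (((sptList u v).drop i.val).headD 0) (((sptList u v).drop (i.val + k.val)).headD 0)
      = ((sptList u v).drop i.val).take (k.val + 1) := by decide

theorem hconsistent : Consistent petersenGraph P := by
  intro u v x y r q s h
  have hsup : sptList u v = r.support ++ (q.support.tail ++ s.support.tail) := by
    rw [← hA, h, Walk.support_append, Walk.support_append]
    congr 1
    rw [Walk.support_eq_cons q, List.cons_append, List.tail_cons, List.tail_cons]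
  have hd1 : (sptList u v).drop r.length = q.support ++ s.support.tail := by
    rw [hsup, drop_support_append r, Walk.support_eq_cons q, List.cons_append, List.tail_cons]
  have hd2 : (sptList u v).drop (r.length + q.length) = y :: s.support.tail := by
    rw [← List.drop_drop, hd1, drop_support_append q]
  have ht : ((sptList u v).drop r.length).take (q.length + 1) = q.support := by
    rw [hd1]
    exact List.take_left' (by rw [Walk.length_support])
  have hlen : (sptList u v).length = r.length + 1 + (q.length + s.length) := by
    have e1 := Walk.length_support r
    have e2 := Walk.length_support q
    have e3 := Walk.length_support s
    rw [hsup]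
    simp only [List.length_append, List.length_tail]
    omega
  have h4 : (sptList u v).length ≤ 4 := hLen u v
  have hr4 : r.length < 4 := by omega
  have hq4 : q.length < 4 := by omega
  have hx : ((sptList u v).drop r.length).headD 0 = x := by
    rw [hd1, Walk.support_eq_cons q, List.cons_append, List.headD_cons]
  have hy : ((sptList u v).drop (r.length + q.length)).headD 0 = y := by
    rw [hd2, List.headD_cons]
  have hb : r.length + q.length < (sptList u v).length := by omega
  have key : sptList (((sptList u v).drop r.length).headD 0)
      (((sptList u v).drop (r.length + q.length)).headD 0)
      = ((sptList u v).drop r.length).take (q.length + 1) :=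
    hC u v ⟨r.length, hr4⟩ ⟨q.length, hq4⟩ hb
  rw [hx, hy, ht] at key
  exact walk_eq_of_support_eq q (P x y) (by rw [hA x y, key])

theorem e17 : (P 1 7).edges = [s(1,0), s(0,5), s(5,7)] := by decide
theorem e28 : (P 2 8).edges = [s(2,1), s(1,6), s(6,8)] := by decide
theorem e39 : (P 3 9).edges = [s(3,2), s(2,7), s(7,9)] := by decide
theorem e45 : (P 4 5).edges = [s(4,3), s(3,8), s(8,5)] := by decide
theorem e06 : (P 0 6).edges = [s(0,4), s(4,9), s(9,6)] := by decide

def Q17 : petersenGraph.Walk 1 7 := (walkOfList 1 7 [2,7]).get (by decide)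
def Q28 : petersenGraph.Walk 2 8 := (walkOfList 2 8 [3,8]).get (by decide)
def Q39 : petersenGraph.Walk 3 9 := (walkOfList 3 9 [4,9]).get (by decide)
def Q45 : petersenGraph.Walk 4 5 := (walkOfList 4 5 [0,5]).get (by decide)
def Q06 : petersenGraph.Walk 0 6 := (walkOfList 0 6 [1,6]).get (by decide)

theorem q17e : Q17.edges = [s(1,2), s(2,7)] := by decide
theorem q28e : Q28.edges = [s(2,3), s(3,8)] := by decide
theorem q39e : Q39.edges = [s(3,4), s(4,9)] := by decide
theorem q45e : Q45.edges = [s(4,0), s(0,5)] := by decide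
theorem q06e : Q06.edges = [s(0,1), s(1,6)] := by decide

theorem q17p : Q17.IsPath := Walk.IsPath.mk' (by decide)
theorem q28p : Q28.IsPath := Walk.IsPath.mk' (by decide)
theorem q39p : Q39.IsPath := Walk.IsPath.mk' (by decide)
theorem q45p : Q45.IsPath := Walk.IsPath.mk' (by decide)
theorem q06p : Q06.IsPath := Walk.IsPath.mk' (by decide)

end PetersenAux

/-- the Petersen graph is not metrizable: it carries a consistent path
system that is not induced by any positive edge weight function. -/
theorem petersen_not_metrizable :
    ∃ P : ∀ u v : Fin 10, petersenGraph.Walk u v,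
      IsPathSystem petersenGraph P ∧ Consistent petersenGraph P ∧
      ∀ w : Sym2 (Fin 10) → ℝ, (∀ e ∈ petersenGraph.edgeSet, 0 < w e) →
        ¬ Induces petersenGraph w P := by
  refine ⟨PetersenAux.P, fun u v => Walk.IsPath.mk' (PetersenAux.hnodup u v),
    PetersenAux.hconsistent, ?_⟩
  intro w hpos hInd
  have h1 := hInd 1 7 PetersenAux.Q17 PetersenAux.q17p
  have h2 := hInd 2 8 PetersenAux.Q28 PetersenAux.q28p
  have h3 := hInd 3 9 PetersenAux.Q39 PetersenAux.q39p
  have h4 := hInd 4 5 PetersenAux.Q45 PetersenAux.q45p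
  have h5 := hInd 0 6 PetersenAux.Q06 PetersenAux.q06p
  unfold walkWeight at h1 h2 h3 h4 h5
  rw [PetersenAux.e17, PetersenAux.q17e] at h1
  rw [PetersenAux.e28, PetersenAux.q28e] at h2
  rw [PetersenAux.e39, PetersenAux.q39e] at h3
  rw [PetersenAux.e45, PetersenAux.q45e] at h4
  rw [PetersenAux.e06, PetersenAux.q06e] at h5
  simp only [List.map_cons, List.map_nil, List.sum_cons, List.sum_nil, add_zero]
    at h1 h2 h3 h4 h5
  have p1 : 0 < w s(5,7) := hpos _ (petersenGraph.mem_edgeSet.2 (by decide))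
  have p2 : 0 < w s(6,8) := hpos _ (petersenGraph.mem_edgeSet.2 (by decide))
  have p3 : 0 < w s(7,9) := hpos _ (petersenGraph.mem_edgeSet.2 (by decide))
  have p4 : 0 < w s(8,5) := hpos _ (petersenGraph.mem_edgeSet.2 (by decide))
  have p5 : 0 < w s(9,6) := hpos _ (petersenGraph.mem_edgeSet.2 (by decide))
  have s1 : w s(1,2) = w s(2,1) := by rw [Sym2.eq_swap]
  have s2 : w s(2,3) = w s(3,2) := by rw [Sym2.eq_swap]
  have s3 : w s(3,4) = w s(4,3) := by rw [Sym2.eq_swap]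
  have s4 : w s(4,0) = w s(0,4) := by rw [Sym2.eq_swap]
  have s5 : w s(0,1) = w s(1,0) := by rw [Sym2.eq_swap]
  linarith
end

section
/- The graph obtained from two disjoint triangles x1x2x3 and y1y2y3 by adding a perfect matching x_i y_i (the 3-prism) admits a consistent path system that is metrizable but not strictly metrizable: it is induced by the constant weight function, but no positive weight function induces it with all chosen paths unique shortest paths. -/
open SimpleGraph

variable {V : Type*}

/-- The 3-prism: two triangles `{0,1,2}` (the `x_i`) and `{3,4,5}` (the `y_i`)
joined by the perfect matching `i — i+3`. -/
def prismGraph : SimpleGraph (Fin 6) :=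
  SimpleGraph.fromRel (fun a b =>
    (a.val < 3 ∧ b.val < 3 ∧ b.val = (a.val + 1) % 3) ∨
    (3 ≤ a.val ∧ 3 ≤ b.val ∧ b.val = 3 + (a.val - 3 + 1) % 3) ∨
    (b.val = a.val + 3))

instance : DecidableRel prismGraph.Adj := fun a b =>
  decidable_of_iff _ (SimpleGraph.fromRel_adj _ a b).symm

/-- one-edge walk -/
def W1 (a b : Fin 6) (h : prismGraph.Adj a b := by decide) : prismGraph.Walk a b :=
  .cons h .nil

/-- two-edge walk -/
def W2 (a m b : Fin 6) (h1 : prismGraph.Adj a m := by decide)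
    (h2 : prismGraph.Adj m b := by decide) : prismGraph.Walk a b :=
  .cons h1 (.cons h2 .nil)

/-- The path system on the prism. -/
def prismP : ∀ u v : Fin 6, prismGraph.Walk u v
  | ⟨0,_⟩, ⟨0,_⟩ => .nil
  | ⟨0,_⟩, ⟨1,_⟩ => W1 0 1
  | ⟨0,_⟩, ⟨2,_⟩ => W1 0 2
  | ⟨0,_⟩, ⟨3,_⟩ => W1 0 3
  | ⟨0,_⟩, ⟨4,_⟩ => W2 0 3 4
  | ⟨0,_⟩, ⟨5,_⟩ => W2 0 2 5
  | ⟨1,_⟩, ⟨0,_⟩ => W1 1 0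
  | ⟨1,_⟩, ⟨1,_⟩ => .nil
  | ⟨1,_⟩, ⟨2,_⟩ => W1 1 2
  | ⟨1,_⟩, ⟨3,_⟩ => W2 1 0 3
  | ⟨1,_⟩, ⟨4,_⟩ => W1 1 4
  | ⟨1,_⟩, ⟨5,_⟩ => W2 1 4 5
  | ⟨2,_⟩, ⟨0,_⟩ => W1 2 0
  | ⟨2,_⟩, ⟨1,_⟩ => W1 2 1
  | ⟨2,_⟩, ⟨2,_⟩ => .nil
  | ⟨2,_⟩, ⟨3,_⟩ => W2 2 5 3
  | ⟨2,_⟩, ⟨4,_⟩ => W2 2 1 4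
  | ⟨2,_⟩, ⟨5,_⟩ => W1 2 5
  | ⟨3,_⟩, ⟨0,_⟩ => W1 3 0
  | ⟨3,_⟩, ⟨1,_⟩ => W2 3 0 1
  | ⟨3,_⟩, ⟨2,_⟩ => W2 3 5 2
  | ⟨3,_⟩, ⟨3,_⟩ => .nil
  | ⟨3,_⟩, ⟨4,_⟩ => W1 3 4
  | ⟨3,_⟩, ⟨5,_⟩ => W1 3 5
  | ⟨4,_⟩, ⟨0,_⟩ => W2 4 3 0
  | ⟨4,_⟩, ⟨1,_⟩ => W1 4 1
  | ⟨4,_⟩, ⟨2,_⟩ => W2 4 1 2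
  | ⟨4,_⟩, ⟨3,_⟩ => W1 4 3
  | ⟨4,_⟩, ⟨4,_⟩ => .nil
  | ⟨4,_⟩, ⟨5,_⟩ => W1 4 5
  | ⟨5,_⟩, ⟨0,_⟩ => W2 5 2 0
  | ⟨5,_⟩, ⟨1,_⟩ => W2 5 4 1
  | ⟨5,_⟩, ⟨2,_⟩ => W1 5 2
  | ⟨5,_⟩, ⟨3,_⟩ => W1 5 3
  | ⟨5,_⟩, ⟨4,_⟩ => W1 5 4
  | ⟨5,_⟩, ⟨5,_⟩ => .nil
  | ⟨_+6,h⟩, _ => absurd h (by omega)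
  | _, ⟨_+6,h⟩ => absurd h (by omega)

lemma prismP_self (x : Fin 6) : prismP x x = .nil := by
  fin_cases x <;> rfl

lemma prismP_adj {x y : Fin 6} (h : prismGraph.Adj x y) :
    prismP x y = SimpleGraph.Walk.cons h .nil := by
  fin_cases x <;> fin_cases y <;> first | rfl | exact absurd h (by decide)

lemma prismP_len (u v : Fin 6) : (prismP u v).length ≤ 2 := by
  fin_cases u <;> fin_cases v <;> decide

lemma prismP_isPath : IsPathSystem prismGraph prismP := by
  intro u v
  rw [SimpleGraph.Walk.isPath_def]
  fin_cases u <;> fin_cases v <;> decide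

lemma prismP_consistent : Consistent prismGraph prismP := by
  intro u v x y r q s h
  cases q with
  | nil => exact (prismP_self x).symm
  | cons h1 q' =>
    cases q' with
    | nil => exact (prismP_adj h1).symm
    | cons h2 q'' =>
      cases q'' with
      | nil =>
        cases r with
        | cons hr r' =>
          exfalso
          have hl := congrArg SimpleGraph.Walk.length h
          simp [SimpleGraph.Walk.length_append] at hl
          have := prismP_len u v
          omega
        | nil =>
          cases s with
          | cons hs s' =>
            exfalso
            have hl := congrArg SimpleGraph.Walk.length h
            simp [SimpleGraph.Walk.length_append] at hl
            have := prismP_len u v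
            omega
          | nil => rw [h]; simp
      | cons h3 q''' =>
        exfalso
        have hl := congrArg SimpleGraph.Walk.length h
        simp [SimpleGraph.Walk.length_append] at hl
        have := prismP_len u v
        omega

lemma walkWeight_const {u v : Fin 6} (p : prismGraph.Walk u v) :
    walkWeight (fun _ => 1) p = (p.length : ℝ) := by
  simp [walkWeight, List.map_const', List.sum_replicate]

lemma prismP_induces : Induces prismGraph (fun _ => 1) prismP := by
  intro u v Q _
  rw [walkWeight_const, walkWeight_const, Nat.cast_le]
  cases Q with
  | nil => simp [prismP_self]
  | cons h1 Q' =>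
    cases Q' with
    | nil => rw [prismP_adj h1]
    | cons h2 Q'' =>
      have := prismP_len u v
      simp only [SimpleGraph.Walk.length_cons]
      omega

/-- the 3-prism admits a consistent path system that is induced by the
constant weight function but is not strictly induced by any positive weight function. -/
theorem prism_metrizable_not_strictly :
    ∃ P : ∀ u v : Fin 6, prismGraph.Walk u v,
      IsPathSystem prismGraph P ∧ Consistent prismGraph P ∧
      Induces prismGraph (fun _ => 1) P ∧
      ∀ w : Sym2 (Fin 6) → ℝ, (∀ e ∈ prismGraph.edgeSet, 0 < w e) →
        ¬ StrictlyInduces prismGraph w P := by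
  refine ⟨prismP, prismP_isPath, prismP_consistent, prismP_induces, ?_⟩
  intro w _ hs
  have e04 : prismP 0 4 = W2 0 3 4 := rfl
  have e15 : prismP 1 5 = W2 1 4 5 := rfl
  have e23 : prismP 2 3 = W2 2 5 3 := rfl
  have e31 : prismP 3 1 = W2 3 0 1 := rfl
  have e42 : prismP 4 2 = W2 4 1 2 := rfl
  have e50 : prismP 5 0 = W2 5 2 0 := rfl
  have h1 := hs 0 4 (W2 0 1 4) (by rw [SimpleGraph.Walk.isPath_def]; decide) (by decide)
  have h2 := hs 1 5 (W2 1 2 5) (by rw [SimpleGraph.Walk.isPath_def]; decide) (by decide)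
  have h3 := hs 2 3 (W2 2 0 3) (by rw [SimpleGraph.Walk.isPath_def]; decide) (by decide)
  have h4 := hs 3 1 (W2 3 4 1) (by rw [SimpleGraph.Walk.isPath_def]; decide) (by decide)
  have h5 := hs 4 2 (W2 4 5 2) (by rw [SimpleGraph.Walk.isPath_def]; decide) (by decide)
  have h6 := hs 5 0 (W2 5 3 0) (by rw [SimpleGraph.Walk.isPath_def]; decide) (by decide)
  rw [e04] at h1; rw [e15] at h2; rw [e23] at h3
  rw [e31] at h4; rw [e42] at h5; rw [e50] at h6
  simp only [walkWeight, W2, SimpleGraph.Walk.edges_cons, SimpleGraph.Walk.edges_nil,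
    List.map_cons, List.map_nil, List.sum_cons, List.sum_nil, add_zero] at h1 h2 h3 h4 h5 h6
  have a1 : s((3:Fin 6),0) = s(0,3) := Sym2.eq_swap
  have a2 : s((4:Fin 6),1) = s(1,4) := Sym2.eq_swap
  have a3 : s((5:Fin 6),2) = s(2,5) := Sym2.eq_swap
  have a4 : s((5:Fin 6),3) = s(3,5) := Sym2.eq_swap
  have a5 : s((2:Fin 6),0) = s(0,2) := Sym2.eq_swap
  rw [a1, a2] at h4
  rw [a2, a3] at h5
  rw [a3, a5, a4, a1] at h6
  rw [a4] at h3
  rw [a5] at h3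
  linarith
end

section
/- Let f : V → E be the crossing function of a consistent path system P in the cycle C_n (n ≥ 3). A nonnegative weight function w strictly induces P if and only if for every vertex x with f(x) = a_x b_x, the inequality |w(P_{x,a_x}) − w(P_{x,b_x})| < w(a_x b_x) holds. -/
open SimpleGraph

variable {V : Type*}

set_option linter.unusedSectionVars false

open scoped Fin.NatCast Fin.CommRing

section CycleAux
variable {n : ℕ} [NeZero n]

lemma adj_succ (hn : 3 ≤ n) (u : Fin n) : (cycleGraph n).Adj u (u + 1) := by
  rw [cycleGraph_adj']
  right
  rw [show u + 1 - u = (1 : Fin n) by ring, Fin.val_one', Nat.mod_eq_of_lt (by omega)]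

lemma adj_pred (hn : 3 ≤ n) (u : Fin n) : (cycleGraph n).Adj u (u - 1) := by
  rw [cycleGraph_adj']
  left
  rw [show u - (u - 1) = (1 : Fin n) by ring, Fin.val_one', Nat.mod_eq_of_lt (by omega)]

def arcF (hn : 3 ≤ n) (u : Fin n) : (k : ℕ) → (cycleGraph n).Walk u (u + (k : Fin n))
  | 0 => Walk.nil.copy rfl (by simp)
  | (k+1) => (Walk.cons (adj_succ hn u) (arcF hn (u+1) k)).copy rfl (by push_cast; ring)

def arcB (hn : 3 ≤ n) (u : Fin n) : (k : ℕ) → (cycleGraph n).Walk u (u - (k : Fin n))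
  | 0 => Walk.nil.copy rfl (by simp)
  | (k+1) => (Walk.cons (adj_pred hn u) (arcB hn (u-1) k)).copy rfl (by push_cast; ring)

lemma support_arcF (hn : 3 ≤ n) (u : Fin n) (k : ℕ) :
    (arcF hn u k).support = (List.range (k+1)).map (fun i : ℕ => u + (i : Fin n)) := by
  induction k generalizing u with
  | zero => simp [List.range_succ, arcF]
  | succ k ih =>
    rw [arcF, Walk.support_copy, Walk.support_cons, ih]
    rw [List.range_succ_eq_map (n := k+1), List.map_cons, List.map_map]
    congr 1
    · simp
    · congr 1; funext i; simp only [Function.comp]; push_cast; ring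

lemma support_arcB (hn : 3 ≤ n) (u : Fin n) (k : ℕ) :
    (arcB hn u k).support = (List.range (k+1)).map (fun i : ℕ => u - (i : Fin n)) := by
  induction k generalizing u with
  | zero => simp [List.range_succ, arcB]
  | succ k ih =>
    rw [arcB, Walk.support_copy, Walk.support_cons, ih]
    rw [List.range_succ_eq_map (n := k+1), List.map_cons, List.map_map]
    congr 1
    · simp
    · congr 1; funext i; simp only [Function.comp]; push_cast; ring

lemma edges_arcF (hn : 3 ≤ n) (u : Fin n) (k : ℕ) :
    (arcF hn u k).edges = (List.range k).map
      (fun i : ℕ => s(u + (i : Fin n), u + ((i+1 : ℕ) : Fin n))) := by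
  induction k generalizing u with
  | zero => simp [arcF]
  | succ k ih =>
    rw [arcF, Walk.edges_copy, Walk.edges_cons, ih]
    rw [List.range_succ_eq_map (n := k), List.map_cons, List.map_map]
    congr 1
    · push_cast; ring_nf
    · congr 1; funext i; simp only [Function.comp]; push_cast; ring_nf

lemma edges_arcB (hn : 3 ≤ n) (u : Fin n) (k : ℕ) :
    (arcB hn u k).edges = (List.range k).map
      (fun i : ℕ => s(u - (i : Fin n), u - ((i+1 : ℕ) : Fin n))) := by
  induction k generalizing u with
  | zero => simp [arcB]
  | succ k ih =>
    rw [arcB, Walk.edges_copy, Walk.edges_cons, ih]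
    rw [List.range_succ_eq_map (n := k), List.map_cons, List.map_map]
    congr 1
    · push_cast; ring_nf
    · congr 1; funext i; simp only [Function.comp]; push_cast; ring_nf

lemma natCast_inj_of_lt {i j : ℕ} (hi : i < n) (hj : j < n) (h : (i : Fin n) = j) : i = j := by
  have := congrArg Fin.val h
  rwa [Fin.val_natCast, Fin.val_natCast, Nat.mod_eq_of_lt hi, Nat.mod_eq_of_lt hj] at this

lemma isPath_arcF (hn : 3 ≤ n) (u : Fin n) {k : ℕ} (hk : k < n) : (arcF hn u k).IsPath := by
  rw [Walk.isPath_def, support_arcF]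
  refine List.Nodup.map_on ?_ List.nodup_range
  intro i hi j hj hij
  rw [List.mem_range] at hi hj
  exact natCast_inj_of_lt (by omega) (by omega) (add_left_cancel hij)

lemma isPath_arcB (hn : 3 ≤ n) (u : Fin n) {k : ℕ} (hk : k < n) : (arcB hn u k).IsPath := by
  rw [Walk.isPath_def, support_arcB]
  refine List.Nodup.map_on ?_ List.nodup_range
  intro i hi j hj hij
  rw [List.mem_range] at hi hj
  exact natCast_inj_of_lt (by omega) (by omega) (sub_right_injective hij)

lemma castSub {a : ℕ} (ha : a ≤ n) : ((n - a : ℕ) : Fin n) = -(a : Fin n) := by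
  have h : ((n - a : ℕ) : Fin n) + (a : Fin n) = 0 := by
    rw [← Nat.cast_add, Nat.sub_add_cancel ha, Fin.natCast_self]
  exact eq_neg_of_add_eq_zero_left h

lemma arcF_edge_mem (hn : 3 ≤ n) (u : Fin n) {k m : ℕ} (hmk : m < k) :
    s(u + (m : Fin n), u + ((m+1 : ℕ) : Fin n)) ∈ (arcF hn u k).edges := by
  rw [edges_arcF]
  exact List.mem_map.2 ⟨m, List.mem_range.2 hmk, rfl⟩

lemma arcB_edge_mem (hn : 3 ≤ n) (u : Fin n) {k m : ℕ} (hk : k ≤ n) (hm : m < n)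
    (h : n - k ≤ m) : s(u + (m : Fin n), u + ((m+1 : ℕ) : Fin n)) ∈ (arcB hn u k).edges := by
  rw [edges_arcB]
  refine List.mem_map.2 ⟨n - 1 - m, List.mem_range.2 (by omega), ?_⟩
  have e1 : ((n-1-m : ℕ) : Fin n) = -((m+1 : ℕ) : Fin n) := by
    rw [show n-1-m = n - (m+1) by omega]; exact castSub (by omega)
  have e2 : ((n-1-m+1 : ℕ) : Fin n) = -((m : ℕ) : Fin n) := by
    rw [show n-1-m+1 = n - m by omega]; exact castSub (by omega)
  rw [e1, e2, sub_neg_eq_add, sub_neg_eq_add]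
  exact Sym2.eq_swap

lemma list_range_map_sum (f : ℕ → ℝ) (k : ℕ) :
    ((List.range k).map f).sum = ∑ i ∈ Finset.range k, f i := by
  induction k with
  | zero => simp
  | succ k ih => rw [List.range_succ, List.map_append, List.sum_append, Finset.sum_range_succ, ih]; simp

lemma sum_range_add' (f : ℕ → ℝ) (a b : ℕ) :
    ∑ i ∈ Finset.range (a + b), f i
      = ∑ i ∈ Finset.range a, f i + ∑ i ∈ Finset.range b, f (a + i) := by
  induction b with
  | zero => simp
  | succ b ih =>
    rw [show a + (b+1) = (a+b)+1 from rfl, Finset.sum_range_succ, ih, Finset.sum_range_succ]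
    ring

lemma split_sum (f : ℕ → ℝ) {a b c : ℕ} (h : a = b + c) :
    ∑ i ∈ Finset.range a, f i
      = ∑ i ∈ Finset.range b, f i + ∑ i ∈ Finset.range c, f (b + i) := by
  subst h; exact sum_range_add' f b c


lemma walkWeight_copy {V : Type*} {G : SimpleGraph V} (w : Sym2 V → ℝ) {u v u' v' : V}
    (p : G.Walk u v) (hu : u = u') (hv : v = v') :
    walkWeight w (p.copy hu hv) = walkWeight w p := by
  rw [walkWeight, walkWeight, Walk.edges_copy]

lemma weight_arcF (w : Sym2 (Fin n) → ℝ) (hn : 3 ≤ n) (u : Fin n) (k : ℕ) :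
    walkWeight w (arcF hn u k)
      = ∑ i ∈ Finset.range k, w s(u + (i : Fin n), u + ((i+1 : ℕ) : Fin n)) := by
  rw [walkWeight, edges_arcF, List.map_map, list_range_map_sum]
  rfl

lemma weight_arcB (w : Sym2 (Fin n) → ℝ) (hn : 3 ≤ n) (u : Fin n) {k : ℕ} (hk : k ≤ n) :
    walkWeight w (arcB hn u k)
      = ∑ i ∈ Finset.range k, w s(u + ((n-k+i : ℕ) : Fin n), u + ((n-k+i+1 : ℕ) : Fin n)) := by
  rw [walkWeight, edges_arcB, List.map_map, list_range_map_sum, ← Finset.sum_range_reflect]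
  refine Finset.sum_congr rfl fun i hi => ?_
  rw [Finset.mem_range] at hi
  simp only [Function.comp]
  rw [show ((n-k+i : ℕ) : Fin n) = -(((k-1-i)+1 : ℕ) : Fin n) by
        rw [show n-k+i = n - ((k-1-i)+1) by omega]; exact castSub (by omega),
      show ((n-k+i+1 : ℕ) : Fin n) = -((k-1-i : ℕ) : Fin n) by
        rw [show n-k+i+1 = n - (k-1-i) by omega]; exact castSub (by omega)]
  rw [← sub_eq_add_neg, ← sub_eq_add_neg]
  exact congrArg w Sym2.eq_swap

lemma classify (hn : 3 ≤ n) {u v : Fin n} (Q : (cycleGraph n).Walk u v) :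
    Q.IsPath →
    (∃ k, k < n ∧ ∃ h : u + (k : Fin n) = v, Q = (arcF hn u k).copy rfl h) ∨
    (∃ k, k < n ∧ ∃ h : u - (k : Fin n) = v, Q = (arcB hn u k).copy rfl h) := by
  induction Q with
  | nil =>
    intro _
    left
    refine ⟨0, by omega, by simp, ?_⟩
    simp only [arcF, Walk.copy_copy]
    rfl
  | @cons u x v ha q ih =>
    intro hQ
    rw [Walk.cons_isPath_iff] at hQ
    obtain ⟨hq, hu⟩ := hQ
    have hx : x = u + 1 ∨ x = u - 1 := by
      rcases cycleGraph_adj'.1 ha with h1 | h1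
      · right
        have h2 : u - x = 1 := Fin.ext (by rw [Fin.val_one', Nat.mod_eq_of_lt (by omega)]; exact h1)
        rw [← h2]; ring
      · left
        have h2 : x - u = 1 := Fin.ext (by rw [Fin.val_one', Nat.mod_eq_of_lt (by omega)]; exact h1)
        rw [← h2]; ring
    rcases hx with rfl | rfl
    · rcases ih hq with ⟨k, hk, h, hEq⟩ | ⟨k, hk, h, hEq⟩
      · -- q forward from u+1
        have hkn : k + 1 < n := by
          by_contra hc
          apply hu
          rw [hEq, Walk.support_copy, support_arcF]
          refine List.mem_map.2 ⟨n-1, List.mem_range.2 (by omega), ?_⟩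
          rw [castSub (by omega : 1 ≤ n), Nat.cast_one]
          ring
        left
        refine ⟨k+1, hkn, by rw [← h]; push_cast; ring, ?_⟩
        rw [hEq]
        simp only [Walk.cons_copy, arcF, Walk.copy_copy]
      · -- q backward from u+1
        rcases Nat.eq_zero_or_pos k with rfl | hk1
        · left
          refine ⟨1, by omega, by rw [← h]; push_cast; ring, ?_⟩
          rw [hEq]
          simp only [Walk.cons_copy, arcF, arcB, Walk.copy_copy]
        · exact absurd (by
            rw [hEq, Walk.support_copy, support_arcB]
            exact List.mem_map.2 ⟨1, List.mem_range.2 (by omega), by rw [Nat.cast_one]; ring⟩) hu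
    · rcases ih hq with ⟨k, hk, h, hEq⟩ | ⟨k, hk, h, hEq⟩
      · -- q forward from u-1
        rcases Nat.eq_zero_or_pos k with rfl | hk1
        · right
          refine ⟨1, by omega, by rw [← h]; push_cast; ring, ?_⟩
          rw [hEq]
          simp only [Walk.cons_copy, arcF, arcB, Walk.copy_copy]
        · exact absurd (by
            rw [hEq, Walk.support_copy, support_arcF]
            exact List.mem_map.2 ⟨1, List.mem_range.2 (by omega), by rw [Nat.cast_one]; ring⟩) hu
      · -- q backward from u-1
        have hkn : k + 1 < n := by
          by_contra hc
          apply hu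
          rw [hEq, Walk.support_copy, support_arcB]
          refine List.mem_map.2 ⟨n-1, List.mem_range.2 (by omega), ?_⟩
          rw [castSub (by omega : 1 ≤ n), Nat.cast_one]
          ring
        right
        refine ⟨k+1, hkn, by rw [← h]; push_cast; ring, ?_⟩
        rw [hEq]
        simp only [Walk.cons_copy, arcB, Walk.copy_copy]

lemma edge_normal_form (hn : 3 ≤ n) {e : Sym2 (Fin n)} (he : e ∈ (cycleGraph n).edgeSet)
    (u : Fin n) : ∃ m, m < n ∧ e = s(u + (m : Fin n), u + ((m+1 : ℕ) : Fin n)) := by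
  obtain ⟨c, d, rfl⟩ : ∃ c d, e = s(c, d) :=
    Sym2.inductionOn e fun c d => ⟨c, d, rfl⟩
  rw [SimpleGraph.mem_edgeSet, cycleGraph_adj'] at he
  rcases he with h1 | h1
  · -- c = d + 1
    have h2 : c - d = 1 := Fin.ext (by rw [Fin.val_one', Nat.mod_eq_of_lt (by omega)]; exact h1)
    have hcd : c = d + 1 := by rw [← h2]; ring
    refine ⟨(d - u).val, (d - u).isLt, ?_⟩
    have hd : u + (((d - u).val : ℕ) : Fin n) = d := by rw [Fin.cast_val_eq_self]; ring
    have hc : u + (((d - u).val + 1 : ℕ) : Fin n) = c := by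
      push_cast; rw [hcd]; ring
    rw [hd, hc]
    exact Sym2.eq_swap
  · -- d = c + 1
    have h2 : d - c = 1 := Fin.ext (by rw [Fin.val_one', Nat.mod_eq_of_lt (by omega)]; exact h1)
    have hcd : d = c + 1 := by rw [← h2]; ring
    refine ⟨(c - u).val, (c - u).isLt, ?_⟩
    have hc : u + (((c - u).val : ℕ) : Fin n) = c := by rw [Fin.cast_val_eq_self]; ring
    have hd : u + (((c - u).val + 1 : ℕ) : Fin n) = d := by
      push_cast; rw [hcd]; ring
    rw [hc, hd]


section PSystem

variable (hn : 3 ≤ n) (P : ∀ u v : Fin n, (cycleGraph n).Walk u v)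
  (hP : IsPathSystem (cycleGraph n) P) {u : Fin n} {m : ℕ} (hm : m < n)
  (hPm : ∀ v, s(u + (m : Fin n), u + ((m+1 : ℕ) : Fin n)) ∉ (P u v).edges)

include hn hP hm hPm

lemma P_eq_arcF {t : ℕ} (htn : t < n) (ht : t ≤ m) (x : Fin n)
    (hxt : u + (t : Fin n) = x) : P u x = (arcF hn u t).copy rfl hxt := by
  rcases classify hn (P u x) (hP u x) with ⟨k, hk, h, hEq⟩ | ⟨k, hk, h, hEq⟩
  · have hkt : k = t :=
      natCast_inj_of_lt hk htn (add_left_cancel (h.trans hxt.symm))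
    subst hkt
    exact hEq
  · rcases Nat.eq_zero_or_pos k with rfl | hk1
    · have hxu : x = u := by rw [← h]; push_cast; ring
      subst hxu
      have ht0 : t = 0 := by
        refine natCast_inj_of_lt htn (by omega) ?_
        have : (t : Fin n) = 0 := by
          have := hxt; rwa [add_eq_left] at this
        rw [this]; push_cast; rfl
      subst ht0
      rw [hEq]
      simp only [arcF, arcB, Walk.copy_copy]
    · exfalso
      apply hPm x
      rw [hEq, Walk.edges_copy]
      refine arcB_edge_mem hn u (by omega) hm ?_
      -- n - k ≤ m  since  t = n - k
      have h3 : (t : Fin n) = ((n - k : ℕ) : Fin n) := by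
        rw [castSub (by omega : k ≤ n)]
        have : u + (t : Fin n) = u + -(k : Fin n) := by
          rw [hxt, ← h]; ring
        exact add_left_cancel this
      have := natCast_inj_of_lt htn (by omega) h3
      omega

lemma P_eq_arcB {t : ℕ} (htn : t < n) (ht : m < t) (x : Fin n)
    (hxt : u - ((n - t : ℕ) : Fin n) = x) : P u x = (arcB hn u (n - t)).copy rfl hxt := by
  rcases classify hn (P u x) (hP u x) with ⟨k, hk, h, hEq⟩ | ⟨k, hk, h, hEq⟩
  · exfalso
    have h3 : (k : Fin n) = (t : Fin n) := by
      have : u + (k : Fin n) = u + (t : Fin n) := by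
        rw [h, ← hxt, castSub (by omega : t ≤ n)]
        ring
      exact add_left_cancel this
    have hkt : k = t := natCast_inj_of_lt hk htn h3
    subst hkt
    apply hPm x
    rw [hEq, Walk.edges_copy]
    exact arcF_edge_mem hn u ht
  · rcases Nat.eq_zero_or_pos k with rfl | hk1
    · exfalso
      have hxu : x = u := by rw [← h]; push_cast; ring
      have : ((n - t : ℕ) : Fin n) = ((0 : ℕ) : Fin n) := by
        have h4 : u - ((n - t : ℕ) : Fin n) = u - ((0:ℕ) : Fin n) := by
          rw [hxt, hxu]; push_cast; ring
        exact sub_right_injective h4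
      have := natCast_inj_of_lt (by omega : n - t < n) (by omega) this
      omega
    · have h3 : (k : Fin n) = ((n - t : ℕ) : Fin n) :=
        sub_right_injective (h.trans hxt.symm)
      have hkt : k = n - t := natCast_inj_of_lt hk (by omega) h3
      subst hkt
      exact hEq

end PSystem

lemma split_sum_head (E : ℕ → ℝ) (b : ℕ) {a c : ℕ} (h : a = 1 + c) :
    ∑ i ∈ Finset.range a, E (b + i) = E b + ∑ i ∈ Finset.range c, E (b + 1 + i) := by
  rw [split_sum (fun i => E (b+i)) h, Finset.sum_range_one]
  exact congrArg₂ (· + ·) (congrArg E (by omega))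
    (Finset.sum_congr rfl fun i _ => congrArg E (by omega))

lemma calc1 (E : ℕ → ℝ) (hE : ∀ i, 0 ≤ E i) {m t : ℕ} (hm : m < n) (ht : t ≤ m)
    (h : ∑ i ∈ Finset.range m, E i - ∑ i ∈ Finset.range (n-(m+1)), E (m+1+i) < E m) :
    ∑ i ∈ Finset.range t, E i < ∑ i ∈ Finset.range (n-t), E (t+i) := by
  have h1 : ∑ i ∈ Finset.range m, E i
      = ∑ i ∈ Finset.range t, E i + ∑ i ∈ Finset.range (m-t), E (t+i) :=
    split_sum E (by omega)
  have h2 : ∑ i ∈ Finset.range (n-t), E (t+i)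
      = ∑ i ∈ Finset.range (m-t), E (t+i) + (E m + ∑ i ∈ Finset.range (n-(m+1)), E (m+1+i)) := by
    have hmid : ∑ i ∈ Finset.range (n-m), E (t+((m-t)+i)) = ∑ i ∈ Finset.range (n-m), E (m+i) :=
      Finset.sum_congr rfl fun i _ => congrArg E (by omega)
    rw [split_sum (fun i => E (t+i)) (show n-t = (m-t) + (n-m) by omega), hmid,
        split_sum_head E m (show n-m = 1 + (n-(m+1)) by omega)]
  have hD : 0 ≤ ∑ i ∈ Finset.range (m-t), E (t+i) := Finset.sum_nonneg fun i _ => hE _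
  linarith

lemma calc2 (E : ℕ → ℝ) (hE : ∀ i, 0 ≤ E i) {m t : ℕ} (hm : m < n) (ht : m < t) (htn : t ≤ n)
    (h : ∑ i ∈ Finset.range (n-(m+1)), E (m+1+i) - ∑ i ∈ Finset.range m, E i < E m) :
    ∑ i ∈ Finset.range (n-t), E (t+i) < ∑ i ∈ Finset.range t, E i := by
  have h1 : ∑ i ∈ Finset.range t, E i
      = ∑ i ∈ Finset.range m, E i + (E m + ∑ i ∈ Finset.range (t-(m+1)), E (m+1+i)) := by
    rw [split_sum E (show t = m + (t-m) by omega),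
        split_sum_head E m (show t-m = 1 + (t-(m+1)) by omega)]
  have h2 : ∑ i ∈ Finset.range (n-(m+1)), E (m+1+i)
      = ∑ i ∈ Finset.range (t-(m+1)), E (m+1+i) + ∑ i ∈ Finset.range (n-t), E (t+i) := by
    have hmid : ∑ i ∈ Finset.range (n-t), E (m+1+((t-(m+1))+i)) = ∑ i ∈ Finset.range (n-t), E (t+i) :=
      Finset.sum_congr rfl fun i _ => congrArg E (by omega)
    rw [split_sum (fun i => E (m+1+i)) (show n-(m+1) = (t-(m+1)) + (n-t) by omega), hmid]
  have hD : 0 ≤ ∑ i ∈ Finset.range (t-(m+1)), E (m+1+i) := Finset.sum_nonneg fun i _ => hE _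
  linarith

/-- Weight of the `i`-th edge of the cycle, in the frame based at `u`. -/
def Ew (w : Sym2 (Fin n) → ℝ) (u : Fin n) (i : ℕ) : ℝ :=
  w s(u + (i : Fin n), u + ((i+1 : ℕ) : Fin n))

section PSystem2

variable (hn : 3 ≤ n) (P : ∀ u v : Fin n, (cycleGraph n).Walk u v)
  (hP : IsPathSystem (cycleGraph n) P) (w : Sym2 (Fin n) → ℝ) {u : Fin n} {m : ℕ} (hm : m < n)
  (hPm : ∀ v, s(u + (m : Fin n), u + ((m+1 : ℕ) : Fin n)) ∉ (P u v).edges)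

include hn hP hm hPm

lemma wP_a : walkWeight w (P u (u + (m : Fin n))) = ∑ i ∈ Finset.range m, Ew w u i := by
  rw [P_eq_arcF hn P hP hm hPm (t := m) hm le_rfl _ rfl, walkWeight_copy, weight_arcF]
  rfl

lemma wP_b : walkWeight w (P u (u + ((m+1 : ℕ) : Fin n)))
    = ∑ i ∈ Finset.range (n-(m+1)), Ew w u (m+1+i) := by
  rcases Nat.lt_or_ge (m+1) n with hlt | hge
  · rw [P_eq_arcB hn P hP hm hPm (t := m+1) hlt (by omega) _
        (by rw [castSub (by omega : m+1 ≤ n), sub_neg_eq_add]),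
      walkWeight_copy, weight_arcB w hn u (by omega : n-(m+1) ≤ n)]
    refine Finset.sum_congr rfl fun i _ => ?_
    rw [show n-(n-(m+1))+i = m+1+i by omega]
    rfl
  · have he : m + 1 = n := by omega
    have hx0 : u + (((0:ℕ)) : Fin n) = u + ((m+1 : ℕ) : Fin n) := by
      rw [he, Fin.natCast_self]; push_cast; ring
    rw [P_eq_arcF hn P hP hm hPm (t := 0) (by omega) (by omega) _ hx0, walkWeight_copy,
      weight_arcF, show n - (m+1) = 0 by omega]
    simp

end PSystem2



end CycleAux

/-- for a consistent path system in `C_n` with crossing function `f`,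
a nonnegative weight function `w` strictly induces the system iff for every vertex
`x` with `f x = s(a,b)` one has `|w(P x a) - w(P x b)| < w(s(a,b))`. -/
theorem cycle_strict_inducing_characterization
    (n : ℕ) (hn : 3 ≤ n)
    (P : ∀ u v : Fin n, (cycleGraph n).Walk u v)
    (hP : IsPathSystem (cycleGraph n) P) (hcons : Consistent (cycleGraph n) P)
    (f : Fin n → Sym2 (Fin n))
    (hf : ∀ x, f x ∈ (cycleGraph n).edgeSet ∧ ∀ v, f x ∉ (P x v).edges)
    (w : Sym2 (Fin n) → ℝ) (hw : ∀ e, 0 ≤ w e) :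
    StrictlyInduces (cycleGraph n) w P ↔
      ∀ (x a b : Fin n), f x = s(a, b) →
        |walkWeight w (P x a) - walkWeight w (P x b)| < w s(a, b) := by
  haveI : NeZero n := ⟨by omega⟩
  constructor
  · intro hSI x a b hfx
    obtain ⟨m, hm, hmx⟩ := edge_normal_form hn ((hf x).1) x
    have hPm : ∀ v, s(x + (m : Fin n), x + ((m+1:ℕ) : Fin n)) ∉ (P x v).edges :=
      fun v => hmx ▸ (hf x).2 v
    have hE : ∀ i, 0 ≤ Ew w x i := fun i => hw _
    have wPa := wP_a hn P hP w hm hPm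
    have wPb := wP_b hn P hP w hm hPm
    set S := ∑ i ∈ Finset.range m, Ew w x i with hSdef
    set T := ∑ i ∈ Finset.range (n-(m+1)), Ew w x (m+1+i) with hTdef
    have hS : 0 ≤ S := Finset.sum_nonneg fun i _ => hE _
    have hT : 0 ≤ T := Finset.sum_nonneg fun i _ => hE _
    have ineq1 : 1 ≤ m → S < Ew w x m + T := by
      intro hm1
      have pfQa : x - ((n-m : ℕ) : Fin n) = x + (m : Fin n) := by
        rw [castSub (by omega : m ≤ n), sub_neg_eq_add]
      set Qa := (arcB hn x (n-m)).copy rfl pfQa with hQadef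
      have hQaP : Qa.IsPath := (Walk.isPath_copy _ _ _).2 (isPath_arcB hn x (by omega))
      have hQane : Qa ≠ P x (x + (m : Fin n)) := by
        intro hcon
        apply hPm (x + (m : Fin n))
        rw [← hcon, hQadef, Walk.edges_copy]
        exact arcB_edge_mem hn x (by omega) hm (by omega)
      have hlt := hSI x (x + (m : Fin n)) Qa hQaP hQane
      rw [wPa] at hlt
      have hQaW : walkWeight w Qa = Ew w x m + T := by
        rw [hQadef, walkWeight_copy, weight_arcB w hn x (by omega : n - m ≤ n)]
        have h1 : ∑ i ∈ Finset.range (n-m),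
            w s(x + ((n-(n-m)+i : ℕ) : Fin n), x + ((n-(n-m)+i+1 : ℕ) : Fin n))
            = ∑ i ∈ Finset.range (n-m), Ew w x (m+i) := by
          refine Finset.sum_congr rfl fun i _ => ?_
          rw [show n-(n-m)+i = m+i by omega]
          rfl
        rw [h1, split_sum_head (Ew w x) m (show n-m = 1+(n-(m+1)) by omega)]
      linarith [hQaW ▸ hlt]
    have ineq2 : m + 1 < n → T < Ew w x m + S := by
      intro hm2
      set Qb := arcF hn x (m+1) with hQbdef
      have hQbP : Qb.IsPath := isPath_arcF hn x (by omega)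
      have hQbne : Qb ≠ P x (x + ((m+1:ℕ) : Fin n)) := by
        intro hcon
        apply hPm (x + ((m+1:ℕ) : Fin n))
        rw [← hcon, hQbdef]
        exact arcF_edge_mem hn x (by omega)
      have hlt := hSI x (x + ((m+1:ℕ) : Fin n)) Qb hQbP hQbne
      rw [wPb] at hlt
      have hQbW : walkWeight w Qb = S + Ew w x m := by
        rw [hQbdef, weight_arcF, Finset.sum_range_succ]
        rfl
      linarith [hQbW ▸ hlt]
    have key : |S - T| < Ew w x m := by
      rw [abs_sub_lt_iff]
      rcases Nat.eq_zero_or_pos m with rfl | hm1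
      · have h2 := ineq2 (by omega)
        have hS0 : S = 0 := by rw [hSdef]; simp
        constructor <;> linarith
      · have h1 := ineq1 hm1
        rcases Nat.lt_or_ge (m+1) n with hlt2 | hge2
        · have h2 := ineq2 hlt2
          constructor <;> linarith
        · have hT0 : T = 0 := by rw [hTdef, show n - (m+1) = 0 by omega]; simp
          constructor <;> linarith
    rcases Sym2.eq_iff.1 (hfx.symm.trans hmx) with ⟨ha, hb⟩ | ⟨ha, hb⟩
    · rw [ha, hb, wPa, wPb,
        show w s(x + (m : Fin n), x + ((m+1:ℕ) : Fin n)) = Ew w x m from rfl]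
      exact key
    · rw [ha, hb, wPa, wPb,
        show (s(x + ((m+1:ℕ) : Fin n), x + (m : Fin n)) : Sym2 (Fin n))
          = s(x + (m : Fin n), x + ((m+1:ℕ) : Fin n)) from Sym2.eq_swap,
        show w s(x + (m : Fin n), x + ((m+1:ℕ) : Fin n)) = Ew w x m from rfl, abs_sub_comm]
      exact key
  · intro H u v Q hQpath hne
    obtain ⟨m, hm, hmx⟩ := edge_normal_form hn ((hf u).1) u
    have hPm : ∀ y, s(u + (m : Fin n), u + ((m+1:ℕ) : Fin n)) ∉ (P u y).edges :=
      fun y => hmx ▸ (hf u).2 y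
    have hE : ∀ i, 0 ≤ Ew w u i := fun i => hw _
    have hyp := H u (u + (m : Fin n)) (u + ((m+1:ℕ) : Fin n)) hmx
    rw [wP_a hn P hP w hm hPm, wP_b hn P hP w hm hPm] at hyp
    have hyp' : |∑ i ∈ Finset.range m, Ew w u i
        - ∑ i ∈ Finset.range (n-(m+1)), Ew w u (m+1+i)| < Ew w u m := hyp
    set t := (v - u).val with htdef
    have htn : t < n := (v - u).isLt
    have hxt : u + ((t : ℕ) : Fin n) = v := by rw [htdef, Fin.cast_val_eq_self]; ring
    rcases Nat.eq_zero_or_pos t with ht0 | ht1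
    · have hvu : v = u := by rw [← hxt, ht0]; push_cast; ring
      subst hvu
      have hQnil : Q = Walk.nil := Walk.isPath_iff_eq_nil.1 hQpath
      have hPnil : P v v = Walk.nil := Walk.isPath_iff_eq_nil.1 (hP v v)
      exact absurd (hQnil.trans hPnil.symm) hne
    · rcases Nat.lt_or_ge m t with hmt | htm
      · -- P u v is the backward arc; Q must be the forward arc
        have hxt' : u - ((n - t : ℕ) : Fin n) = v := by
          rw [castSub (by omega : t ≤ n), sub_neg_eq_add]; exact hxt
        have hPuv := P_eq_arcB hn P hP hm hPm htn hmt v hxt'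
        rcases classify hn Q hQpath with ⟨k, hk, h, hEq⟩ | ⟨k, hk, h, hEq⟩
        · have hkt : k = t := natCast_inj_of_lt hk htn (add_left_cancel (h.trans hxt.symm))
          subst hkt
          rw [hPuv, hEq, walkWeight_copy, walkWeight_copy,
            weight_arcB w hn u (by omega : n - t ≤ n), weight_arcF]
          have hrw : ∑ i ∈ Finset.range (n-t),
              w s(u + ((n-(n-t)+i : ℕ) : Fin n), u + ((n-(n-t)+i+1 : ℕ) : Fin n))
              = ∑ i ∈ Finset.range (n-t), Ew w u (t+i) := by
            refine Finset.sum_congr rfl fun i _ => ?_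
            rw [show n-(n-t)+i = t+i by omega]
            rfl
          rw [hrw]
          exact calc2 (Ew w u) hE hm hmt (by omega) (abs_sub_lt_iff.1 hyp').2
        · have hk1 : 1 ≤ k := by
            rcases Nat.eq_zero_or_pos k with rfl | h1
            · exfalso
              have hvu : v = u := by rw [← h]; push_cast; ring
              rw [htdef, hvu] at ht1
              simp at ht1
            · exact h1
          have hknt : k = n - t := by
            have h3 : (k : Fin n) = ((n - t : ℕ) : Fin n) :=
              sub_right_injective (h.trans hxt'.symm)
            exact natCast_inj_of_lt hk (by omega) h3
          subst hknt
          exact absurd (hEq.trans hPuv.symm) hne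
      · -- P u v is the forward arc; Q must be the backward arc
        have hPuv := P_eq_arcF hn P hP hm hPm htn htm v hxt
        rcases classify hn Q hQpath with ⟨k, hk, h, hEq⟩ | ⟨k, hk, h, hEq⟩
        · have hkt : k = t := natCast_inj_of_lt hk htn (add_left_cancel (h.trans hxt.symm))
          subst hkt
          exact absurd (hEq.trans hPuv.symm) hne
        · have hk1 : 1 ≤ k := by
            rcases Nat.eq_zero_or_pos k with rfl | h1
            · exfalso
              have hvu : v = u := by rw [← h]; push_cast; ring
              rw [htdef, hvu] at ht1
              simp at ht1
            · exact h1
          have hxt' : u - ((n - t : ℕ) : Fin n) = v := by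
            rw [castSub (by omega : t ≤ n), sub_neg_eq_add]; exact hxt
          have hknt : k = n - t := by
            have h3 : (k : Fin n) = ((n - t : ℕ) : Fin n) :=
              sub_right_injective (h.trans hxt'.symm)
            exact natCast_inj_of_lt hk (by omega) h3
          subst hknt
          rw [hPuv, hEq, walkWeight_copy, walkWeight_copy,
            weight_arcB w hn u (by omega : n - t ≤ n), weight_arcF]
          have hrw : ∑ i ∈ Finset.range (n-t),
              w s(u + ((n-(n-t)+i : ℕ) : Fin n), u + ((n-(n-t)+i+1 : ℕ) : Fin n))
              = ∑ i ∈ Finset.range (n-t), Ew w u (t+i) := by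
            refine Finset.sum_congr rfl fun i _ => ?_
            rw [show n-(n-t)+i = t+i by omega]
            rfl
          rw [hrw]
          exact calc1 (Ew w u) hE hm htm (abs_sub_lt_iff.1 hyp').1
end
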